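/- arXiv:1503.08461 — 6 statements merged into one kernel-verified Lean document; each statement's English description precedes it below -/
import Mathlib

section
/- The map Φ : ℂ × {t ∈ ℂ : |t| = 1} → SU(2) defined by Φ(ζ, t) = k(ζ)·d(t) is a homeomorphism onto its image, and its image {g ∈ SU(2) : g₁₁ ≠ 0} is an open dense subset of SU(2). -/
open Matrix Complex

/-- `k(ζ) = (1+|ζ|²)^(−1/2) · [[1, −conj ζ],[ζ, 1]]`, an element of SU(2). -/
noncomputable def kmat (ζ : ℂ) : Matrix (Fin 2) (Fin 2) ℂ :=
  ((Real.sqrt (1 + ‖ζ‖ ^ 2) : ℂ))⁻¹ • !![1, -(starRingEnd ℂ ζ); ζ, 1]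

/-- `d(t) = diag(t, conj t)`. -/
noncomputable def dmat (t : ℂ) : Matrix (Fin 2) (Fin 2) ℂ :=
  !![t, 0; 0, starRingEnd ℂ t]

/-- SU(2), as a subset of the 2×2 complex matrices. -/
def SU2 : Set (Matrix (Fin 2) (Fin 2) ℂ) :=
  {g | g ∈ Matrix.unitaryGroup (Fin 2) ℂ ∧ g.det = 1}


noncomputable def cfac (ζ : ℂ) : ℝ := (Real.sqrt (1 + ‖ζ‖ ^ 2))⁻¹

lemma cfac_pos (ζ : ℂ) : 0 < cfac ζ := by
  have : (0:ℝ) < 1 + ‖ζ‖ ^ 2 := by positivity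
  exact inv_pos.2 (Real.sqrt_pos.2 this)

lemma cfac_sq (ζ : ℂ) : (cfac ζ)^2 * (1 + ‖ζ‖^2) = 1 := by
  have h : (0:ℝ) < 1 + ‖ζ‖ ^ 2 := by positivity
  have := Real.sq_sqrt h.le
  rw [cfac, inv_pow, this, inv_mul_cancel₀ h.ne']

noncomputable def mk2 (a b : ℂ) : Matrix (Fin 2) (Fin 2) ℂ :=
  !![a, b; -(starRingEnd ℂ b), starRingEnd ℂ a]

lemma kd_eq (ζ t : ℂ) :
    kmat ζ * dmat t = mk2 ((cfac ζ : ℂ) * t) (-((cfac ζ : ℂ) * (starRingEnd ℂ ζ * starRingEnd ℂ t))) := by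
  ext i j
  fin_cases i <;> fin_cases j <;>
    simp [kmat, dmat, mk2, cfac, mul_apply, Fin.sum_univ_two, _root_.map_mul] <;> ring

lemma mk2_mem_SU2 {a b : ℂ} (h : a * starRingEnd ℂ a + b * starRingEnd ℂ b = 1) :
    mk2 a b ∈ SU2 := by
  constructor
  · rw [Matrix.mem_unitaryGroup_iff']
    ext i j
    fin_cases i <;> fin_cases j <;>
      simp [mk2, mul_apply, Fin.sum_univ_two, star_apply, one_apply] <;>
      first | ring1 | linear_combination h
  · rw [Matrix.det_fin_two]
    simp [mk2]
    linear_combination h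

lemma SU2_structure {g : Matrix (Fin 2) (Fin 2) ℂ} (hg : g ∈ SU2) :
    g = mk2 (g 0 0) (g 0 1) ∧
      g 0 0 * starRingEnd ℂ (g 0 0) + g 0 1 * starRingEnd ℂ (g 0 1) = 1 := by
  have h1 : star g = g⁻¹ := Matrix.inv_eq_left_inv (Matrix.mem_unitaryGroup_iff'.1 hg.1) |>.symm
  have h2 : g⁻¹ = g.adjugate := by
    rw [Matrix.inv_def, hg.2]; simp
  have h3 : star g = g.adjugate := h1.trans h2
  rw [Matrix.adjugate_fin_two] at h3
  have e10 : starRingEnd ℂ (g 0 1) = -(g 1 0) := by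
    have := congrFun (congrFun h3 1) 0; simpa [star_apply] using this
  have e11 : g 1 1 = starRingEnd ℂ (g 0 0) := by
    have h := congrFun (congrFun h3 1) 1
    simp [star_apply] at h
    rw [← h, Complex.conj_conj]
  have hdet := hg.2
  rw [Matrix.det_fin_two] at hdet
  constructor
  · ext i j
    fin_cases i <;> fin_cases j <;> simp [mk2, e10, e11]
  · rw [e10, ← e11]; linear_combination hdet

lemma norm_sq_sum {a b : ℂ} (h : a * starRingEnd ℂ a + b * starRingEnd ℂ b = 1) :
    ‖a‖^2 + ‖b‖^2 = 1 := by
  have := congrArg Complex.re h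
  simpa [Complex.mul_conj, Complex.normSq_eq_norm_sq,
    ← Complex.ofReal_pow] using this

lemma conj_sum_of_norm {a b : ℂ} (h : ‖a‖^2 + ‖b‖^2 = 1) :
    a * starRingEnd ℂ a + b * starRingEnd ℂ b = 1 := by
  rw [Complex.mul_conj, Complex.mul_conj]
  rw [← Complex.ofReal_add, ← Complex.ofReal_one]
  norm_cast
  simpa [Complex.normSq_eq_norm_sq] using h

lemma cfac_eq {a b : ℂ} (ha : a ≠ 0) (h : ‖a‖^2 + ‖b‖^2 = 1) :
    cfac (-(starRingEnd ℂ b) / a) = ‖a‖ := by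
  have hna : ‖a‖ ≠ 0 := norm_ne_zero_iff.2 ha
  have key : 1 + ‖-(starRingEnd ℂ b) / a‖ ^ 2 = (‖a‖^2)⁻¹ := by
    rw [norm_div, norm_neg, RCLike.norm_conj, div_pow]
    have h2 : ‖a‖^2 ≠ 0 := pow_ne_zero 2 hna
    have e : 1 + ‖b‖^2/‖a‖^2 = (‖a‖^2 + ‖b‖^2)/‖a‖^2 := by
      rw [add_div, div_self h2]
    rw [e, h, one_div]
  rw [cfac, key, Real.sqrt_inv, Real.sqrt_sq (norm_nonneg a), inv_inv]

lemma phi_of {a b : ℂ} (ha : a ≠ 0) (h : ‖a‖^2 + ‖b‖^2 = 1) :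
    kmat (-(starRingEnd ℂ b) / a) * dmat (a / (‖a‖ : ℂ)) = mk2 a b := by
  rw [kd_eq, cfac_eq ha h]
  have hna : ((‖a‖ : ℝ) : ℂ) ≠ 0 := by
    simpa using norm_ne_zero_iff.2 ha
  have hca : starRingEnd ℂ a ≠ 0 := by simpa using ha
  have e1 : ((‖a‖:ℂ)) * (a / (‖a‖:ℂ)) = a := by
    rw [mul_comm, div_mul_cancel₀ _ hna]
  have e2 : -((‖a‖:ℂ) * (starRingEnd ℂ (-(starRingEnd ℂ b) / a) * starRingEnd ℂ (a / (‖a‖:ℂ)))) = b := by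
    simp only [map_div₀, map_neg, Complex.conj_conj, Complex.conj_ofReal]
    field_simp
  rw [e1, e2]

lemma phi_norms (ζ t : ℂ) (ht : ‖t‖ = 1) :
    ‖(cfac ζ : ℂ) * t‖^2 + ‖-((cfac ζ : ℂ) * (starRingEnd ℂ ζ * starRingEnd ℂ t))‖^2 = 1 := by
  have hc := cfac_pos ζ
  simp only [norm_neg, norm_mul, Complex.norm_real, Real.norm_eq_abs, RCLike.norm_conj, ht,
    mul_one, abs_of_pos hc]
  linear_combination cfac_sq ζ

lemma cont_cfac : Continuous fun ζ : ℂ => ((cfac ζ : ℝ) : ℂ) := by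
  refine Complex.continuous_ofReal.comp (Continuous.inv₀ ?_ ?_)
  · exact Real.continuous_sqrt.comp (continuous_const.add ((continuous_norm).pow 2))
  · intro x
    exact (Real.sqrt_pos.2 (by positivity)).ne'

lemma cont_kmat : Continuous kmat := by
  have h1 : Continuous fun ζ : ℂ => !![(1:ℂ), -(starRingEnd ℂ ζ); ζ, 1] := by
    refine continuous_matrix fun i j => ?_
    fin_cases i <;> fin_cases j <;> simp <;> continuity
  have : Continuous fun ζ : ℂ => ((cfac ζ : ℝ) : ℂ) • !![(1:ℂ), -(starRingEnd ℂ ζ); ζ, 1] :=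
    cont_cfac.smul h1
  convert this using 2 with ζ
  simp [kmat, cfac]

lemma cont_dmat : Continuous dmat := by
  refine continuous_matrix fun i j => ?_
  fin_cases i <;> fin_cases j <;> simp [dmat] <;> continuity

lemma SU2_mul {g h : Matrix (Fin 2) (Fin 2) ℂ} (hg : g ∈ SU2) (hh : h ∈ SU2) :
    g * h ∈ SU2 :=
  ⟨mul_mem hg.1 hh.1, by rw [Matrix.det_mul, hg.2, hh.2, one_mul]⟩

noncomputable def rot (ε : ℝ) : Matrix (Fin 2) (Fin 2) ℂ :=
  !![(Real.cos ε : ℂ), -(Real.sin ε : ℂ); (Real.sin ε : ℂ), (Real.cos ε : ℂ)]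

lemma rot_mem (ε : ℝ) : rot ε ∈ SU2 := by
  constructor
  · rw [Matrix.mem_unitaryGroup_iff']
    ext i j
    fin_cases i <;> fin_cases j <;>
      simp [rot, mul_apply, Fin.sum_univ_two, star_apply, one_apply, Complex.conj_ofReal,
        -Complex.ofReal_cos, -Complex.ofReal_sin] <;>
      norm_cast <;>
      first
        | ring1
        | linear_combination Real.sin_sq_add_cos_sq ε
  · rw [Matrix.det_fin_two]
    simp [rot, -Complex.ofReal_cos, -Complex.ofReal_sin]
    norm_cast
    linear_combination Real.sin_sq_add_cos_sq ε

lemma rot_cont : Continuous rot := by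
  refine continuous_matrix fun i j => ?_
  fin_cases i <;> fin_cases j <;>
    simp [rot, -Complex.ofReal_cos, -Complex.ofReal_sin] <;> continuity

lemma rot_zero : rot 0 = 1 := by
  ext i j
  fin_cases i <;> fin_cases j <;> simp [rot, Matrix.one_apply]

lemma phi_entry_ne (ζ : ℂ) {t : ℂ} (ht : ‖t‖ = 1) : (kmat ζ * dmat t) 0 0 ≠ 0 := by
  rw [kd_eq]
  have ht0 : t ≠ 0 := by intro h; rw [h] at ht; simp at ht
  have hc : ((cfac ζ : ℝ) : ℂ) ≠ 0 := by exact_mod_cast (cfac_pos ζ).ne'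
  simpa [mk2] using mul_ne_zero hc ht0

lemma phi_range : Set.range (fun p : ℂ × {t : ℂ // ‖t‖ = 1} => kmat p.1 * dmat p.2.1)
    = {g | g ∈ SU2 ∧ g 0 0 ≠ 0} := by
  ext g
  constructor
  · rintro ⟨⟨ζ, t, ht⟩, rfl⟩
    refine ⟨?_, phi_entry_ne ζ ht⟩
    show kmat ζ * dmat t ∈ SU2
    rw [kd_eq]
    exact mk2_mem_SU2 (conj_sum_of_norm (phi_norms ζ t ht))
  · rintro ⟨hg, h0⟩
    obtain ⟨hstruct, hsum⟩ := SU2_structure hg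
    have hn := norm_sq_sum hsum
    have ht : ‖g 0 0 / ((‖g 0 0‖ : ℝ) : ℂ)‖ = 1 := by
      rw [norm_div, Complex.norm_real, Real.norm_eq_abs, _root_.abs_of_nonneg (norm_nonneg _),
        div_self (norm_ne_zero_iff.2 h0)]
    exact ⟨(-(starRingEnd ℂ (g 0 1)) / g 0 0, ⟨g 0 0 / ((‖g 0 0‖ : ℝ) : ℂ), ht⟩),
      by
        show kmat (-(starRingEnd ℂ (g 0 1)) / g 0 0) * dmat (g 0 0 / ((‖g 0 0‖ : ℝ) : ℂ)) = g
        rw [phi_of h0 hn]; exact hstruct.symm⟩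

lemma phi_isEmbedding :
    Topology.IsEmbedding (fun p : ℂ × {t : ℂ // ‖t‖ = 1} => kmat p.1 * dmat p.2.1) := by
  set U : Set (Matrix (Fin 2) (Fin 2) ℂ) := {m | m 0 0 ≠ 0} with hU
  have hΦU : ∀ p : ℂ × {t : ℂ // ‖t‖ = 1}, kmat p.1 * dmat p.2.1 ∈ U :=
    fun p => phi_entry_ne p.1 p.2.2
  let Φ' : ℂ × {t : ℂ // ‖t‖ = 1} → U := fun p => ⟨kmat p.1 * dmat p.2.1, hΦU p⟩
  let Ψ : U → ℂ × {t : ℂ // ‖t‖ = 1} := fun m =>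
    (m.1 1 0 / m.1 0 0, ⟨m.1 0 0 / ((‖m.1 0 0‖ : ℝ) : ℂ), by
      rw [norm_div, Complex.norm_real, Real.norm_eq_abs, _root_.abs_of_nonneg (norm_nonneg _),
        div_self (norm_ne_zero_iff.2 m.2)]⟩)
  have hΦcont : Continuous fun p : ℂ × {t : ℂ // ‖t‖ = 1} => kmat p.1 * dmat p.2.1 :=
    (cont_kmat.comp continuous_fst).matrix_mul
      (cont_dmat.comp (continuous_subtype_val.comp continuous_snd))
  have hΦ'cont : Continuous Φ' := hΦcont.subtype_mk _
  have hm : Continuous fun m : U => (m.1 : Matrix (Fin 2) (Fin 2) ℂ) := continuous_subtype_val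
  have h00 : Continuous fun m : U => m.1 0 0 := hm.matrix_elem 0 0
  have h10 : Continuous fun m : U => m.1 1 0 := hm.matrix_elem 1 0
  have hΨcont : Continuous Ψ := by
    refine Continuous.prodMk (h10.div h00 fun m => m.2) ?_
    refine Continuous.subtype_mk ?_ _
    exact h00.div (Complex.continuous_ofReal.comp h00.norm) fun m => by
      simpa using norm_ne_zero_iff.2 m.2
  have hLI : Function.LeftInverse Ψ Φ' := by
    rintro ⟨ζ, t, ht⟩
    have hc : (0:ℝ) < cfac ζ := cfac_pos ζ
    have hcC : ((cfac ζ : ℝ) : ℂ) ≠ 0 := by exact_mod_cast hc.ne'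
    have ht0 : t ≠ 0 := by intro h; rw [h] at ht; simp at ht
    have e00 : (kmat ζ * dmat t) 0 0 = (cfac ζ : ℂ) * t := by rw [kd_eq]; simp [mk2]
    have e10 : (kmat ζ * dmat t) 1 0 = (cfac ζ : ℂ) * (ζ * t) := by
      rw [kd_eq]
      simp [mk2, _root_.map_mul, Complex.conj_conj, Complex.conj_ofReal]
    refine Prod.ext ?_ (Subtype.ext ?_)
    · show (kmat ζ * dmat t) 1 0 / (kmat ζ * dmat t) 0 0 = ζ
      rw [e00, e10]
      field_simp
    · show (kmat ζ * dmat t) 0 0 / ((‖(kmat ζ * dmat t) 0 0‖ : ℝ) : ℂ) = t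
      rw [e00, norm_mul, Complex.norm_real, Real.norm_eq_abs, abs_of_pos hc, ht, mul_one,
        mul_comm, mul_div_assoc, div_self hcC, mul_one]
  have hcont00 : Continuous fun m : Matrix (Fin 2) (Fin 2) ℂ => m 0 0 :=
    continuous_id.matrix_elem 0 0
  have hval : Topology.IsEmbedding (Subtype.val : U → Matrix (Fin 2) (Fin 2) ℂ) :=
    Topology.IsEmbedding.subtypeVal
  exact hval.comp (Function.LeftInverse.isEmbedding hLI hΨcont hΦ'cont)


/-- The map `Φ(ζ,t) = k(ζ)·d(t)` on `ℂ × (unit circle)` is a homeomorphism onto its image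
(an embedding), its image is `{g ∈ SU(2) : g₁₁ ≠ 0}`, and this image is open and dense
in SU(2) (with its subspace topology from the 2×2 matrices). -/
theorem su2_root_subgroup_coordinates_homeomorphism :
    Topology.IsEmbedding (fun p : ℂ × {t : ℂ // ‖t‖ = 1} => kmat p.1 * dmat p.2.1) ∧
    Set.range (fun p : ℂ × {t : ℂ // ‖t‖ = 1} => kmat p.1 * dmat p.2.1)
      = {g | g ∈ SU2 ∧ g 0 0 ≠ 0} ∧
    IsOpen {g : SU2 | (g : Matrix (Fin 2) (Fin 2) ℂ) 0 0 ≠ 0} ∧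
    Dense {g : SU2 | (g : Matrix (Fin 2) (Fin 2) ℂ) 0 0 ≠ 0} := by
  refine ⟨phi_isEmbedding, phi_range, ?_, ?_⟩
  · have hc : Continuous fun g : SU2 => (g : Matrix (Fin 2) (Fin 2) ℂ) 0 0 :=
      continuous_subtype_val.matrix_elem 0 0
    exact isOpen_ne.preimage hc
  · intro g
    by_cases h0 : (g : Matrix (Fin 2) (Fin 2) ℂ) 0 0 ≠ 0
    · exact subset_closure h0
    · push_neg at h0
      have hdet := g.2.2
      rw [Matrix.det_fin_two] at hdet
      have hb : (g : Matrix (Fin 2) (Fin 2) ℂ) 0 1 ≠ 0 := by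
        intro h; rw [h0, h] at hdet; simp at hdet
      set f : ℝ → SU2 := fun ε => ⟨(g : Matrix (Fin 2) (Fin 2) ℂ) * rot ε,
        SU2_mul g.2 (rot_mem ε)⟩ with hf
      have hfc : Continuous f := (continuous_const.matrix_mul rot_cont).subtype_mk _
      have hf0 : f 0 = g := Subtype.ext (by simp [hf, rot_zero])
      have htend : Filter.Tendsto f (nhdsWithin 0 (Set.Ioi 0)) (nhds g) := by
        have h := hfc.tendsto 0
        rw [hf0] at h
        exact h.mono_left nhdsWithin_le_nhds
      refine mem_closure_of_tendsto htend ?_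
      have hπ : ∀ᶠ ε in nhdsWithin (0:ℝ) (Set.Ioi 0), ε < Real.pi :=
        Filter.Eventually.filter_mono nhdsWithin_le_nhds
          (isOpen_Iio.eventually_mem (show (0:ℝ) ∈ Set.Iio Real.pi from Real.pi_pos))
      filter_upwards [self_mem_nhdsWithin, hπ] with ε hε hεπ
      show (f ε : Matrix (Fin 2) (Fin 2) ℂ) 0 0 ≠ 0
      have he : (f ε : Matrix (Fin 2) (Fin 2) ℂ) 0 0
          = (g : Matrix (Fin 2) (Fin 2) ℂ) 0 1 * ((Real.sin ε : ℝ) : ℂ) := by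
        simp [hf, rot, mul_apply, Fin.sum_univ_two, h0,
          -Complex.ofReal_sin, -Complex.ofReal_cos]
      rw [he]
      exact mul_ne_zero hb
        (by exact_mod_cast (Real.sin_pos_of_pos_of_lt_pi hε hεπ).ne')
end

section
/- Let p, q ≥ 1 and let g be an element of SU(p,q), written in block form g = [[a, b],[c, d]] with a of size p×p, b of size p×q, c of size q×p, d of size q×q. Then: (i) a and d are invertible; (ii) setting Z = c·a⁻¹, the matrix I_p − Zᴴ·Z is positive definite; (iii) g admits a factorization g = [[I_p, 0],[Z', I_q]] · [[A, 0],[0, D]] · [[I_p, W],[0, I_q]] with Z' a q×p matrix, A ∈ GL(p,ℂ), D ∈ GL(q,ℂ), W a p×q matrix, and this factorization is unique, with Z' = c·a⁻¹, A = a, D = d − c·a⁻¹·b, W = a⁻¹·b. -/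
open Matrix
open scoped ComplexOrder

/-- `J = diag(I_p, −I_q)`, the defining form of SU(p,q). -/
def Jpq (p q : ℕ) : Matrix (Fin p ⊕ Fin q) (Fin p ⊕ Fin q) ℂ :=
  Matrix.fromBlocks 1 0 0 (-1)

private lemma aux_posDef_conjTranspose_mul_self {n : Type*} [Fintype n] [DecidableEq n]
    {B : Matrix n n ℂ} (hB : IsUnit B) : (Bᴴ * B).PosDef := by
  refine Matrix.PosDef.of_dotProduct_mulVec_pos (Matrix.isHermitian_conjTranspose_mul_self _) fun x hx => ?_
  rw [← Matrix.mulVec_mulVec, Matrix.dotProduct_mulVec, Matrix.vecMul_conjTranspose, star_star]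
  have hBx : B *ᵥ x ≠ 0 := by
    intro h
    exact hx (Matrix.mulVec_injective_iff_isUnit.2 hB (h.trans (Matrix.mulVec_zero B).symm))
  exact Matrix.dotProduct_star_self_pos_iff.mpr hBx

/-- Block triangular factorization in SU(p,q): if `g = [[a,b],[c,d]] ∈ SU(p,q)` then `a` and
`d` are invertible, `I_p − (c·a⁻¹)ᴴ·(c·a⁻¹)` is positive definite, and `g` factors uniquely
as (block lower unitriangular)·(block diagonal)·(block upper unitriangular), with the factors
given explicitly by `Z' = c·a⁻¹`, `A = a`, `D = d − c·a⁻¹·b`, `W = a⁻¹·b`. -/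
theorem supq_block_triangular_factorization
    (p q : ℕ) (hp : 1 ≤ p) (hq : 1 ≤ q)
    (g : Matrix (Fin p ⊕ Fin q) (Fin p ⊕ Fin q) ℂ)
    (hdet : g.det = 1) (hJ : g.conjTranspose * Jpq p q * g = Jpq p q) :
    IsUnit g.toBlocks₁₁ ∧ IsUnit g.toBlocks₂₂ ∧
    ((1 : Matrix (Fin p) (Fin p) ℂ)
      - (g.toBlocks₂₁ * g.toBlocks₁₁⁻¹).conjTranspose * (g.toBlocks₂₁ * g.toBlocks₁₁⁻¹)).PosDef ∧
    (∀ (Z' : Matrix (Fin q) (Fin p) ℂ) (A : Matrix (Fin p) (Fin p) ℂ)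
        (D : Matrix (Fin q) (Fin q) ℂ) (W : Matrix (Fin p) (Fin q) ℂ),
      (IsUnit A ∧ IsUnit D ∧
          g = Matrix.fromBlocks 1 0 Z' 1 * Matrix.fromBlocks A 0 0 D * Matrix.fromBlocks 1 W 0 1)
        ↔ (Z' = g.toBlocks₂₁ * g.toBlocks₁₁⁻¹ ∧ A = g.toBlocks₁₁ ∧
            D = g.toBlocks₂₂ - g.toBlocks₂₁ * g.toBlocks₁₁⁻¹ * g.toBlocks₁₂ ∧
            W = g.toBlocks₁₁⁻¹ * g.toBlocks₁₂)) := by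
  obtain ⟨a, b, c, d, rfl⟩ : ∃ a b c d, g = Matrix.fromBlocks a b c d :=
    ⟨_, _, _, _, (Matrix.fromBlocks_toBlocks g).symm⟩
  simp only [Matrix.toBlocks_fromBlocks₁₁, Matrix.toBlocks_fromBlocks₁₂,
    Matrix.toBlocks_fromBlocks₂₁, Matrix.toBlocks_fromBlocks₂₂]
  rw [Jpq, Matrix.fromBlocks_conjTranspose, Matrix.fromBlocks_multiply,
    Matrix.fromBlocks_multiply] at hJ
  have h11 : aᴴ * a = 1 + cᴴ * c := by
    have h := congrArg Matrix.toBlocks₁₁ hJ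
    simp only [Matrix.toBlocks_fromBlocks₁₁, Matrix.mul_one, Matrix.mul_zero, Matrix.mul_neg,
      Matrix.neg_mul, add_zero, zero_add, zero_sub, sub_zero, ← sub_eq_add_neg] at h
    exact sub_eq_iff_eq_add.mp h
  have h22 : dᴴ * d = 1 + bᴴ * b := by
    have h := congrArg Matrix.toBlocks₂₂ hJ
    simp only [Matrix.toBlocks_fromBlocks₂₂, Matrix.mul_one, Matrix.mul_zero, Matrix.mul_neg,
      Matrix.neg_mul, add_zero, zero_add, zero_sub, sub_zero, ← sub_eq_add_neg] at h
    rw [sub_eq_iff_eq_add] at h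
    rw [h]; abel
  have hA : IsUnit a := by
    have hpd : (aᴴ * a).PosDef := by
      rw [h11]
      exact Matrix.PosDef.one.add_posSemidef (Matrix.posSemidef_conjTranspose_mul_self c)
    have hu := (Matrix.isUnit_iff_isUnit_det _).1 hpd.isUnit
    rw [Matrix.det_mul] at hu
    exact (Matrix.isUnit_iff_isUnit_det _).2 (isUnit_of_mul_isUnit_right hu)
  have hD : IsUnit d := by
    have hpd : (dᴴ * d).PosDef := by
      rw [h22]
      exact Matrix.PosDef.one.add_posSemidef (Matrix.posSemidef_conjTranspose_mul_self b)
    have hu := (Matrix.isUnit_iff_isUnit_det _).1 hpd.isUnit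
    rw [Matrix.det_mul] at hu
    exact (Matrix.isUnit_iff_isUnit_det _).2 (isUnit_of_mul_isUnit_right hu)
  have hadet : IsUnit a.det := (Matrix.isUnit_iff_isUnit_det _).1 hA
  have hinv : a * a⁻¹ = 1 := Matrix.mul_nonsing_inv a hadet
  have hinv' : a⁻¹ * a = 1 := Matrix.nonsing_inv_mul a hadet
  refine ⟨hA, hD, ?_, ?_⟩
  · have hc : cᴴ * c = aᴴ * a - 1 := by rw [h11]; abel
    have e1 : (c * a⁻¹)ᴴ * (c * a⁻¹) = (a⁻¹)ᴴ * (cᴴ * c) * a⁻¹ := by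
      rw [Matrix.conjTranspose_mul]; simp only [Matrix.mul_assoc]
    have hT : (a⁻¹)ᴴ * aᴴ = 1 := by
      rw [← Matrix.conjTranspose_mul, hinv, Matrix.conjTranspose_one]
    have e2 : (a⁻¹)ᴴ * (aᴴ * a) * a⁻¹ = 1 := by
      calc (a⁻¹)ᴴ * (aᴴ * a) * a⁻¹ = (a⁻¹)ᴴ * aᴴ * (a * a⁻¹) := by
            simp only [Matrix.mul_assoc]
        _ = 1 := by rw [hT, hinv, Matrix.mul_one]
    have key : (1 : Matrix (Fin p) (Fin p) ℂ) - (c * a⁻¹)ᴴ * (c * a⁻¹) = (a⁻¹)ᴴ * a⁻¹ := by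
      rw [e1, hc, Matrix.mul_sub, Matrix.sub_mul, Matrix.mul_one, e2]
      abel
    rw [key]
    exact aux_posDef_conjTranspose_mul_self (Matrix.isUnit_nonsing_inv_iff.2 hA)
  · intro Z' A D W
    constructor
    · rintro ⟨hAu, hDu, hg⟩
      rw [Matrix.fromBlocks_multiply, Matrix.fromBlocks_multiply] at hg
      simp only [Matrix.one_mul, Matrix.mul_one, Matrix.mul_zero, Matrix.zero_mul,
        add_zero, zero_add] at hg
      have ea : a = A := by simpa using congrArg Matrix.toBlocks₁₁ hg
      have eb : b = A * W := by simpa using congrArg Matrix.toBlocks₁₂ hg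
      have ec : c = Z' * A := by simpa using congrArg Matrix.toBlocks₂₁ hg
      have ed : d = Z' * A * W + D := by simpa using congrArg Matrix.toBlocks₂₂ hg
      subst ea
      have hZ : c * a⁻¹ = Z' := by rw [ec, Matrix.mul_assoc, hinv, Matrix.mul_one]
      have hW : a⁻¹ * b = W := by rw [eb, ← Matrix.mul_assoc, hinv', Matrix.one_mul]
      refine ⟨hZ.symm, rfl, ?_, hW.symm⟩
      rw [ed, ec, eb]
      have h5 : Z' * a * a⁻¹ * (a * W) = Z' * a * W := by
        rw [Matrix.mul_assoc Z' a a⁻¹, hinv, Matrix.mul_one, ← Matrix.mul_assoc]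
      rw [h5]
      abel
    · rintro ⟨rfl, rfl, rfl, rfl⟩
      refine ⟨hA, ?_, ?_⟩
      · haveI := Matrix.invertibleOfIsUnitDet A hadet
        rw [Matrix.det_fromBlocks₁₁, Matrix.invOf_eq_nonsing_inv] at hdet
        exact (Matrix.isUnit_iff_isUnit_det _).2
          (IsUnit.of_mul_eq_one _ ((mul_comm _ _).trans hdet))
      · rw [Matrix.fromBlocks_multiply, Matrix.fromBlocks_multiply]
        have e12 : A * (A⁻¹ * b) = b := by rw [← Matrix.mul_assoc, hinv, Matrix.one_mul]
        have e21 : c * A⁻¹ * A = c := by rw [Matrix.mul_assoc, hinv', Matrix.mul_one]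
        have e22 : c * (A⁻¹ * b) + (d - c * A⁻¹ * b) = d := by
          rw [← Matrix.mul_assoc]; abel
        simp only [Matrix.one_mul, Matrix.mul_one, Matrix.mul_zero, Matrix.zero_mul,
          add_zero, zero_add, e12, e21, e22]
end

section
/- Let p, q ≥ 1 and let Z be a q×p complex matrix such that I_p − Zᴴ·Z is positive definite. Then there exists g ∈ SU(p,q), with block form g = [[a, b],[c, d]] (a of size p×p), such that a is invertible and c·a⁻¹ = Z. Hence the set of lower block factors arising from elements of SU(p,q) is exactly {Z : I_p − Zᴴ·Z is positive definite}. -/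
open Matrix
open scoped ComplexOrder

lemma dot_star_self_eq {n : ℕ} (v : Fin n → ℂ) :
    dotProduct (star v) v = ((‖(WithLp.equiv 2 (Fin n → ℂ)).symm v‖ : ℝ) : ℂ)^2 := by
  have hin : dotProduct (star v) v = inner ℂ ((WithLp.equiv 2 (Fin n → ℂ)).symm v)
      ((WithLp.equiv 2 (Fin n → ℂ)).symm v) := by rw [dotProduct_comm]; rfl
  rw [hin, inner_self_eq_norm_sq_to_K]; norm_cast

lemma one_sub_mul_conjTranspose_posDef {p q : ℕ} (Z : Matrix (Fin q) (Fin p) ℂ)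
    (hZ : ((1 : Matrix (Fin p) (Fin p) ℂ) - Zᴴ * Z).PosDef) :
    ((1 : Matrix (Fin q) (Fin q) ℂ) - Z * Zᴴ).PosDef := by
  refine PosDef.of_dotProduct_mulVec_pos (isHermitian_one.sub (isHermitian_mul_conjTranspose_self Z)) fun x hx => ?_
  set y := Zᴴ *ᵥ x with hy_def
  set nx := ‖(WithLp.equiv 2 (Fin q → ℂ)).symm x‖ with hnx
  set ny := ‖(WithLp.equiv 2 (Fin p → ℂ)).symm y‖ with hny
  have hnx0 : 0 < nx := by
    rw [hnx, norm_pos_iff]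
    intro h
    exact hx (by simpa using congrArg (WithLp.equiv 2 (Fin q → ℂ)) h)
  have key : dotProduct (star x) ((Z * Zᴴ) *ᵥ x) = dotProduct (star y) y := by
    rw [← mulVec_mulVec, dotProduct_mulVec, star_mulVec, conjTranspose_conjTranspose]
  have hval : dotProduct (star x) (((1 : Matrix (Fin q) (Fin q) ℂ) - Z * Zᴴ) *ᵥ x)
      = ((nx : ℂ)^2 - (ny : ℂ)^2) := by
    rw [sub_mulVec, dotProduct_sub, one_mulVec, key, dot_star_self_eq, dot_star_self_eq]
  rw [hval]
  have : ny < nx := by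
    rcases eq_or_ne y 0 with h0 | hy
    · rw [hny, h0]; simpa using hnx0
    have hny0 : 0 < ny := by
      rw [hny, norm_pos_iff]
      intro h
      exact hy (by simpa using congrArg (WithLp.equiv 2 (Fin p → ℂ)) h)
    -- from hypothesis : ‖Z y‖ < ‖y‖
    set w := Z *ᵥ y with hw_def
    set nw := ‖(WithLp.equiv 2 (Fin q → ℂ)).symm w‖ with hnw
    have key2 : dotProduct (star y) ((Zᴴ * Z) *ᵥ y) = dotProduct (star w) w := by
      rw [← mulVec_mulVec, dotProduct_mulVec, ← star_mulVec]
    have h1 := hZ.dotProduct_mulVec_pos hy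
    rw [sub_mulVec, dotProduct_sub, one_mulVec, key2, dot_star_self_eq, dot_star_self_eq,
      show ((ny : ℂ)^2 - (nw : ℂ)^2) = (((ny^2 - nw^2 : ℝ)) : ℂ) by push_cast; ring,
      Complex.zero_lt_real, sub_pos] at h1
    have hwy : nw < ny := lt_of_pow_lt_pow_left₀ 2 (le_of_lt hny0) h1
    -- Cauchy-Schwarz
    have hxy : dotProduct (star y) y = dotProduct (star x) w := by
      rw [hy_def, star_mulVec, conjTranspose_conjTranspose, ← dotProduct_mulVec, mulVec_mulVec]
      rw [hw_def, hy_def, mulVec_mulVec]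
    have hcs : ny^2 ≤ nx * nw := by
      have h2 : (ny : ℝ)^2 = ‖(inner ℂ ((WithLp.equiv 2 (Fin q → ℂ)).symm x)
          ((WithLp.equiv 2 (Fin q → ℂ)).symm w) : ℂ)‖ := by
        rw [show inner ℂ ((WithLp.equiv 2 (Fin q → ℂ)).symm x)
            ((WithLp.equiv 2 (Fin q → ℂ)).symm w) = dotProduct (star x) w by
            rw [dotProduct_comm]; rfl, ← hxy, dot_star_self_eq, ← hny]
        rw [show ((ny:ℂ)^2) = (((ny^2 : ℝ)) : ℂ) by push_cast; ring]
        rw [Complex.norm_real]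
        exact (Real.norm_of_nonneg (by positivity)).symm
      rw [h2]
      exact norm_inner_le_norm _ _
    have : ny * ny < nx * ny := by
      calc ny * ny = ny^2 := by ring
        _ ≤ nx * nw := hcs
        _ < nx * ny := by exact mul_lt_mul_of_pos_left hwy hnx0
    exact lt_of_mul_lt_mul_right this (le_of_lt hny0)
  rw [show ((nx : ℂ)^2 - (ny : ℂ)^2) = (((nx^2 - ny^2 : ℝ)) : ℂ) by push_cast; ring,
    Complex.zero_lt_real, sub_pos]
  exact pow_lt_pow_left₀ this (norm_nonneg _) (by norm_num)

lemma posDef_conjTranspose_mul_self_of_isUnit {n : ℕ} (B : Matrix (Fin n) (Fin n) ℂ)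
    (hB : IsUnit B) : (Bᴴ * B).PosDef := by
  refine PosDef.of_dotProduct_mulVec_pos (isHermitian_conjTranspose_mul_self B) fun x hx => ?_
  rw [← mulVec_mulVec, dotProduct_mulVec, ← star_mulVec]
  rw [dotProduct_star_self_pos_iff]
  intro h
  exact hx (Matrix.mulVec_injective_iff_isUnit.mpr hB (by simpa using h))

lemma reverse {p q : ℕ} (g : Matrix (Fin p ⊕ Fin q) (Fin p ⊕ Fin q) ℂ)
    (hrel : g.conjTranspose * Jpq p q * g = Jpq p q) (hu : IsUnit g.toBlocks₁₁) :
    ((1 : Matrix (Fin p) (Fin p) ℂ)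
      - (g.toBlocks₂₁ * g.toBlocks₁₁⁻¹)ᴴ * (g.toBlocks₂₁ * g.toBlocks₁₁⁻¹)).PosDef := by
  set a := g.toBlocks₁₁ with ha
  set c := g.toBlocks₂₁ with hc
  have hadet : IsUnit a.det := (isUnit_iff_isUnit_det a).mp hu
  have h := hrel
  rw [← fromBlocks_toBlocks g] at h
  simp only [Jpq, fromBlocks_conjTranspose, fromBlocks_multiply, Matrix.mul_one,
    Matrix.mul_zero, zero_add, add_zero, Matrix.mul_neg, Matrix.neg_mul,
    Matrix.zero_mul, Matrix.one_mul] at h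
  rw [Matrix.fromBlocks_inj] at h
  obtain ⟨h11, -, -, -⟩ := h
  have e : (1 : Matrix (Fin p) (Fin p) ℂ) - (c * a⁻¹)ᴴ * (c * a⁻¹) = (a⁻¹)ᴴ * a⁻¹ := by
    have step : (a⁻¹)ᴴ * a⁻¹ = (a⁻¹)ᴴ * ((aᴴ * a + -(cᴴ * c)) * a⁻¹) := by
      rw [h11, Matrix.one_mul]
    rw [step]
    have expand : (a⁻¹)ᴴ * ((aᴴ * a + -(cᴴ * c)) * a⁻¹)
        = (a⁻¹)ᴴ * aᴴ * (a * a⁻¹) + -((a⁻¹)ᴴ * (cᴴ * (c * a⁻¹))) := by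
      simp [Matrix.add_mul, Matrix.mul_add, Matrix.mul_assoc, Matrix.neg_mul, Matrix.mul_neg]
    rw [expand, mul_nonsing_inv a hadet, Matrix.mul_one, conjTranspose_nonsing_inv,
      nonsing_inv_mul aᴴ (by rw [det_conjTranspose]; exact hadet.star)]
    simp [conjTranspose_mul, Matrix.mul_assoc, sub_eq_add_neg, conjTranspose_nonsing_inv]
  rw [e]
  exact posDef_conjTranspose_mul_self_of_isUnit a⁻¹ (isUnit_nonsing_inv_iff.mpr hu)

open scoped MatrixOrder in
lemma construct {p q : ℕ} (hpq : 0 < p + q) (Z : Matrix (Fin q) (Fin p) ℂ)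
    (hZ : ((1:Matrix (Fin p) (Fin p) ℂ) - Zᴴ * Z).PosDef)
    (hN : ((1:Matrix (Fin q) (Fin q) ℂ) - Z * Zᴴ).PosDef) :
    ∃ g : Matrix (Fin p ⊕ Fin q) (Fin p ⊕ Fin q) ℂ,
      g.det = 1 ∧ g.conjTranspose * Jpq p q * g = Jpq p q ∧
      IsUnit g.toBlocks₁₁ ∧ g.toBlocks₂₁ * g.toBlocks₁₁⁻¹ = Z := by
  set S := CFC.sqrt ((1:Matrix (Fin p) (Fin p) ℂ) - Zᴴ * Z) with hS_def
  set T := CFC.sqrt ((1:Matrix (Fin q) (Fin q) ℂ) - Z * Zᴴ) with hT_def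
  have hS2 : S * S = 1 - Zᴴ * Z := CFC.sqrt_mul_sqrt_self _ hZ.posSemidef.nonneg
  have hT2 : T * T = 1 - Z * Zᴴ := CFC.sqrt_mul_sqrt_self _ hN.posSemidef.nonneg
  have hSH : Sᴴ = S := (nonneg_iff_posSemidef.mp (CFC.sqrt_nonneg _)).isHermitian
  have hTH : Tᴴ = T := (nonneg_iff_posSemidef.mp (CFC.sqrt_nonneg _)).isHermitian
  have hSdet : IsUnit S.det := by
    have h : S.det * S.det = ((1:Matrix (Fin p) (Fin p) ℂ) - Zᴴ * Z).det := by
      rw [← det_mul, hS2]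
    exact isUnit_iff_ne_zero.mpr (fun h0 => hZ.det_pos.ne' (by rw [← h, h0, mul_zero]))
  have hTdet : IsUnit T.det := by
    have h : T.det * T.det = ((1:Matrix (Fin q) (Fin q) ℂ) - Z * Zᴴ).det := by
      rw [← det_mul, hT2]
    exact isUnit_iff_ne_zero.mpr (fun h0 => hN.det_pos.ne' (by rw [← h, h0, mul_zero]))
  have hSinv : S⁻¹ᴴ = S⁻¹ := by rw [conjTranspose_nonsing_inv, hSH]
  have hTinv : T⁻¹ᴴ = T⁻¹ := by rw [conjTranspose_nonsing_inv, hTH]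
  set g₀ : Matrix (Fin p ⊕ Fin q) (Fin p ⊕ Fin q) ℂ :=
    fromBlocks (S⁻¹) (Zᴴ * T⁻¹) (Z * S⁻¹) (T⁻¹) with hg₀_def
  have hrel : g₀ᴴ * Jpq p q * g₀ = Jpq p q := by
    rw [hg₀_def]
    simp only [Jpq, fromBlocks_conjTranspose, fromBlocks_multiply, Matrix.mul_one,
      Matrix.mul_zero, zero_add, add_zero, Matrix.mul_neg, Matrix.neg_mul,
      Matrix.zero_mul, Matrix.one_mul, conjTranspose_mul, conjTranspose_conjTranspose,
      hSinv, hTinv]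
    rw [Matrix.fromBlocks_inj]
    refine ⟨?_, by simp [Matrix.mul_assoc], by simp [Matrix.mul_assoc], ?_⟩
    · have h1 : S⁻¹ * (1 - Zᴴ * Z) * S⁻¹ = 1 := by
        rw [← hS2]
        simp only [Matrix.mul_assoc]
        rw [mul_nonsing_inv S hSdet, Matrix.mul_one, nonsing_inv_mul S hSdet]
      have h2 : S⁻¹ * S⁻¹ + -(S⁻¹ * Zᴴ * (Z * S⁻¹)) = S⁻¹ * (1 - Zᴴ * Z) * S⁻¹ := by
        simp [Matrix.mul_sub, Matrix.sub_mul, Matrix.mul_assoc, sub_eq_add_neg, Matrix.add_mul, Matrix.mul_add, Matrix.mul_neg, Matrix.neg_mul]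
      rw [h2, h1]
    · have h1 : T⁻¹ * (1 - Z * Zᴴ) * T⁻¹ = 1 := by
        rw [← hT2]
        simp only [Matrix.mul_assoc]
        rw [mul_nonsing_inv T hTdet, Matrix.mul_one, nonsing_inv_mul T hTdet]
      have h2 : T⁻¹ * Z * (Zᴴ * T⁻¹) + -(T⁻¹ * T⁻¹) = -(T⁻¹ * (1 - Z * Zᴴ) * T⁻¹) := by
        simp [Matrix.mul_sub, Matrix.sub_mul, Matrix.mul_assoc, sub_eq_add_neg, Matrix.add_mul, Matrix.mul_add, Matrix.mul_neg, Matrix.neg_mul, neg_add, add_comm]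
      rw [h2, h1]
  -- |det g₀| = 1
  have hJdet : (Jpq p q).det ≠ 0 := by
    simp [Jpq, det_fromBlocks_zero₂₁, det_neg]
  have hdet1 : star g₀.det * g₀.det = 1 := by
    have h := congrArg Matrix.det hrel
    rw [det_mul, det_mul, det_conjTranspose] at h
    have h' : (Jpq p q).det * (star g₀.det * g₀.det) = (Jpq p q).det * 1 := by
      calc (Jpq p q).det * (star g₀.det * g₀.det)
          = star g₀.det * (Jpq p q).det * g₀.det := by ring
        _ = (Jpq p q).det * 1 := by rw [h, mul_one]
    exact mul_left_cancel₀ hJdet h'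
  have hgdet_ne : g₀.det ≠ 0 := by
    intro h0; rw [h0, mul_zero] at hdet1; exact zero_ne_one hdet1
  have habs : ‖g₀.det‖ = 1 := by
    have : (Complex.normSq g₀.det : ℂ) = 1 := by
      rw [← hdet1, Complex.star_def, mul_comm, Complex.mul_conj]
    have h2 : Complex.normSq g₀.det = 1 := by exact_mod_cast this
    rw [← Complex.sq_norm] at h2
    nlinarith [norm_nonneg g₀.det]
  -- scaling factor
  obtain ⟨l, hl⟩ := IsAlgClosed.exists_pow_nat_eq (g₀.det)⁻¹ (n := p + q)
    hpq
  have hl0 : l ≠ 0 := by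
    intro h0
    rw [h0, zero_pow hpq.ne'] at hl
    exact inv_ne_zero hgdet_ne hl.symm
  have habs_l : star l * l = 1 := by
    have h1 : ‖l‖ ^ (p + q) = 1 := by
      rw [← norm_pow, hl, norm_inv, habs, inv_one]
    have h2 : ‖l‖ = 1 := by
      rcases lt_trichotomy (‖l‖) 1 with h | h | h
      · have := pow_lt_one₀ (norm_nonneg l) h hpq.ne'
        rw [h1] at this; exact absurd this (lt_irrefl 1)
      · exact h
      · have := one_lt_pow₀ h hpq.ne'
        rw [h1] at this; exact absurd this (lt_irrefl 1)
    rw [Complex.star_def, mul_comm, Complex.mul_conj, Complex.normSq_eq_norm_sq, h2]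
    norm_num
  have hSunit : IsUnit (S⁻¹) :=
    isUnit_nonsing_inv_iff.mpr ((isUnit_iff_isUnit_det S).mpr hSdet)
  have hlSunit : IsUnit (l • S⁻¹) := by
    rw [isUnit_iff_isUnit_det, det_smul]
    exact ((isUnit_iff_ne_zero.mpr hl0).pow _).mul ((isUnit_iff_isUnit_det _).mp hSunit)
  have hb11 : (l • g₀).toBlocks₁₁ = l • S⁻¹ := by
    rw [hg₀_def, Matrix.fromBlocks_smul, toBlocks_fromBlocks₁₁]
  have hb21 : (l • g₀).toBlocks₂₁ = l • (Z * S⁻¹) := by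
    rw [hg₀_def, Matrix.fromBlocks_smul, toBlocks_fromBlocks₂₁]
  refine ⟨l • g₀, ?_, ?_, ?_, ?_⟩
  · rw [det_smul]
    have hc : Fintype.card (Fin p ⊕ Fin q) = p + q := by simp
    rw [hc, hl, inv_mul_cancel₀ hgdet_ne]
  · rw [conjTranspose_smul, smul_mul_assoc, smul_mul_assoc, mul_smul_comm, smul_smul,
      habs_l, one_smul, hrel]
  · rw [hb11]; exact hlSunit
  · rw [hb11, hb21, ← Matrix.mul_smul, Matrix.mul_assoc,
      mul_nonsing_inv _ ((isUnit_iff_isUnit_det _).mp hlSunit), Matrix.mul_one]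

/-- Surjectivity of the lower block factor of SU(p,q): every `Z` with `I_p − Zᴴ·Z` positive
definite arises as `c·a⁻¹` from some `g = [[a,b],[c,d]] ∈ SU(p,q)` with `a` invertible; hence
the set of lower block factors of elements of SU(p,q) is exactly
`{Z : I_p − Zᴴ·Z positive definite}`. -/
theorem supq_lower_factor_surjectivity (p q : ℕ) (hp : 1 ≤ p) (hq : 1 ≤ q) :
    (∀ Z : Matrix (Fin q) (Fin p) ℂ,
      ((1 : Matrix (Fin p) (Fin p) ℂ) - Z.conjTranspose * Z).PosDef →
      ∃ g : Matrix (Fin p ⊕ Fin q) (Fin p ⊕ Fin q) ℂ,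
        g.det = 1 ∧ g.conjTranspose * Jpq p q * g = Jpq p q ∧
        IsUnit g.toBlocks₁₁ ∧ g.toBlocks₂₁ * g.toBlocks₁₁⁻¹ = Z) ∧
    {Z : Matrix (Fin q) (Fin p) ℂ |
        ∃ g : Matrix (Fin p ⊕ Fin q) (Fin p ⊕ Fin q) ℂ,
          g.det = 1 ∧ g.conjTranspose * Jpq p q * g = Jpq p q ∧
          IsUnit g.toBlocks₁₁ ∧ g.toBlocks₂₁ * g.toBlocks₁₁⁻¹ = Z}
      = {Z : Matrix (Fin q) (Fin p) ℂ |
          ((1 : Matrix (Fin p) (Fin p) ℂ) - Z.conjTranspose * Z).PosDef} := by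
  have hpq : 0 < p + q := by omega
  constructor
  · intro Z hZ
    exact construct hpq Z hZ (one_sub_mul_conjTranspose_posDef Z hZ)
  · ext Z
    simp only [Set.mem_setOf_eq]
    constructor
    · rintro ⟨g, -, hrel, hu, hZeq⟩
      rw [← hZeq]
      exact reverse g hrel hu
    · intro hZ
      exact construct hpq Z hZ (one_sub_mul_conjTranspose_posDef Z hZ)
end

section
/- Let Φ be a finite reduced crystallographic root system with base Δ and positive roots Φ⁺, and let v = r_n ⋯ r_2 r_1 be a reduced expression of an element v of the Weyl group W, where r_j is the simple reflection associated to a simple root γ_j ∈ Δ. Define τ_j = (r_1 r_2 ⋯ r_{j−1})(γ_j) for j = 1, …, n. Then for each n, (1/2)·Σ_{β ∈ Φ⁺} ⟨β, τ_n^∨⟩ − 1 = Σ_{k=1}^{n−1} ⟨τ_k, τ_n^∨⟩, i.e. δ(h_{τ_n}) − 1 equals the sum over k < n of τ_k evaluated on the coroot of τ_n, where δ is the half-sum of the positive roots. -/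
open scoped RealInnerProductSpace

section AuxRootSystem

variable {V : Type*} [NormedAddCommGroup V] [InnerProductSpace ℝ V]

private lemma aux_mul_apply (f g : V ≃ₗ[ℝ] V) (x : V) : (f * g) x = f (g x) := rfl

private lemma aux_one_apply (x : V) : (1 : V ≃ₗ[ℝ] V) x = x := rfl

private lemma aux_unique (Δ : Finset V)
    (hind : LinearIndependent ℝ (Subtype.val : {x : V // x ∈ Δ} → V))
    (c d : V → ℝ) (h : ∑ γ ∈ Δ, c γ • γ = ∑ γ ∈ Δ, d γ • γ) :
    ∀ x ∈ Δ, c x = d x := by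
  classical
  have key := Fintype.linearIndependent_iff.mp hind (fun i => c i.1 - d i.1) ?_
  · intro x hx
    have := key ⟨x, hx⟩
    simpa [sub_eq_zero] using this
  · have : ∑ i : {x : V // x ∈ Δ}, (c i.1 - d i.1) • (i.1 : V)
        = ∑ x ∈ Δ, (c x - d x) • x := by
      rw [← Finset.sum_attach Δ (fun x => (c x - d x) • x)]
      rfl
    rw [this]
    simp only [sub_smul, Finset.sum_sub_distrib, h, sub_self]

private lemma aux_refl_self (s : V → (V ≃ₗ[ℝ] V))
    (hs : ∀ α x, s α x = x - (2 * ⟪x, α⟫ / ⟪α, α⟫) • α)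
    (α : V) (hα : ⟪α, α⟫ ≠ 0) : s α α = -α := by
  rw [hs, mul_div_assoc, div_self hα, mul_one, two_smul]; abel

private lemma aux_refl_invol (s : V → (V ≃ₗ[ℝ] V))
    (hs : ∀ α x, s α x = x - (2 * ⟪x, α⟫ / ⟪α, α⟫) • α)
    (α : V) (hα : ⟪α, α⟫ ≠ 0) (x : V) : s α (s α x) = x := by
  rw [hs α (s α x), hs α x]
  simp only [inner_sub_left, real_inner_smul_left]
  rw [show 2 * (⟪x, α⟫ - 2 * ⟪x, α⟫ / ⟪α, α⟫ * ⟪α, α⟫) / ⟪α, α⟫ = -(2 * ⟪x, α⟫ / ⟪α, α⟫) by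
    field_simp; ring]
  rw [neg_smul]
  abel

private lemma aux_refl_inner (s : V → (V ≃ₗ[ℝ] V))
    (hs : ∀ α x, s α x = x - (2 * ⟪x, α⟫ / ⟪α, α⟫) • α)
    (α : V) (hα : ⟪α, α⟫ ≠ 0) (x y : V) : ⟪s α x, s α y⟫ = ⟪x, y⟫ := by
  rw [hs, hs]
  simp only [inner_sub_left, inner_sub_right, real_inner_smul_left, real_inner_smul_right]
  rw [real_inner_comm α x, real_inner_comm α y]
  field_simp
  ring

private lemma aux_prod_inner (Φ : Finset V) (h0 : (0 : V) ∉ Φ)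
    (s : V → (V ≃ₗ[ℝ] V))
    (hs : ∀ α x, s α x = x - (2 * ⟪x, α⟫ / ⟪α, α⟫) • α)
    (l : List V) (hl : ∀ x ∈ l, x ∈ Φ) (x y : V) :
    ⟪(l.map s).prod x, (l.map s).prod y⟫ = ⟪x, y⟫ := by
  induction l with
  | nil => simp [aux_one_apply]
  | cons a t ih =>
    have haΦ : a ∈ Φ := hl a List.mem_cons_self
    have hip : ⟪a, a⟫ ≠ 0 := fun h => h0 ((inner_self_eq_zero.mp h) ▸ haΦ)
    have ht : ∀ x ∈ t, x ∈ Φ := fun x hx => hl x (List.mem_cons_of_mem a hx)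
    simp only [List.map_cons, List.prod_cons, aux_mul_apply]
    rw [aux_refl_inner s hs a hip, ih ht]

private lemma aux_simple_pos (Φ : Finset V) (Δ : Finset V) (hΔΦ : Δ ⊆ Φ)
    (Pos : Finset V)
    (hPos : ∀ α, α ∈ Pos ↔
      α ∈ Φ ∧ ∃ c : V → ℝ, (∀ γ, 0 ≤ c γ) ∧ α = ∑ γ ∈ Δ, c γ • γ)
    {γ₀ : V} (hγ₀ : γ₀ ∈ Δ) : γ₀ ∈ Pos := by
  classical
  refine (hPos γ₀).mpr ⟨hΔΦ hγ₀, fun x => if x = γ₀ then 1 else 0, ?_, ?_⟩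
  · intro x; by_cases h : x = γ₀ <;> simp [h]
  · simp [ite_smul, hγ₀]

private lemma aux_key (Φ : Finset V) (h0 : (0 : V) ∉ Φ)
    (s : V → (V ≃ₗ[ℝ] V))
    (hs : ∀ α x, s α x = x - (2 * ⟪x, α⟫ / ⟪α, α⟫) • α)
    (hmap : ∀ α ∈ Φ, ∀ β ∈ Φ, s α β ∈ Φ)
    (hred : ∀ α ∈ Φ, ∀ c : ℝ, c • α ∈ Φ → c = 1 ∨ c = -1)
    (Δ : Finset V) (hΔΦ : Δ ⊆ Φ)
    (hind : LinearIndependent ℝ (Subtype.val : {x : V // x ∈ Δ} → V))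
    (hbase : ∀ α ∈ Φ,
      (∃ c : V → ℝ, (∀ γ, 0 ≤ c γ) ∧ α = ∑ γ ∈ Δ, c γ • γ) ∨
      (∃ c : V → ℝ, (∀ γ, c γ ≤ 0) ∧ α = ∑ γ ∈ Δ, c γ • γ))
    (Pos : Finset V)
    (hPos : ∀ α, α ∈ Pos ↔
      α ∈ Φ ∧ ∃ c : V → ℝ, (∀ γ, 0 ≤ c γ) ∧ α = ∑ γ ∈ Δ, c γ • γ)
    {γ₀ : V} (hγ₀ : γ₀ ∈ Δ) {β : V} (hβ : β ∈ Pos) (hne : β ≠ γ₀) :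
    s γ₀ β ∈ Pos ∧ s γ₀ β ≠ γ₀ := by
  classical
  obtain ⟨hβΦ, c, hc, hrep⟩ := (hPos β).mp hβ
  have hγΦ : γ₀ ∈ Φ := hΔΦ hγ₀
  have hγ0 : γ₀ ≠ 0 := fun h => h0 (h ▸ hγΦ)
  have hip : ⟪γ₀, γ₀⟫ ≠ 0 := fun h => hγ0 (inner_self_eq_zero.mp h)
  have hsβΦ : s γ₀ β ∈ Φ := hmap γ₀ hγΦ β hβΦ
  have hne' : s γ₀ β ≠ γ₀ := by
    intro h
    have hβval : β = -γ₀ := by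
      have := congrArg (s γ₀) h
      rw [aux_refl_invol s hs γ₀ hip, aux_refl_self s hs γ₀ hip] at this
      exact this
    have hneg : (-γ₀ : V) = ∑ x ∈ Δ, (fun x => if x = γ₀ then (-1:ℝ) else 0) x • x := by
      simp [ite_smul, hγ₀]
    have h2 : c γ₀ = -1 := by
      simpa using aux_unique Δ hind c (fun x => if x = γ₀ then (-1:ℝ) else 0)
        (by rw [← hrep, hβval]; exact hneg) γ₀ hγ₀
    linarith [hc γ₀]
  refine ⟨?_, hne'⟩
  by_cases hex : ∃ δ ∈ Δ, δ ≠ γ₀ ∧ 0 < c δ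
  · obtain ⟨δ₀, hδ₀Δ, hδ₀ne, hδ₀pos⟩ := hex
    set k : ℝ := 2 * ⟪β, γ₀⟫ / ⟪γ₀, γ₀⟫ with hk
    set c' : V → ℝ := fun x => if x = γ₀ then c γ₀ - k else c x with hc'
    have hrep' : s γ₀ β = ∑ δ ∈ Δ, c' δ • δ := by
      have hterm : ∀ δ ∈ Δ, c' δ • δ = c δ • δ - (if δ = γ₀ then k • γ₀ else 0) := by
        intro δ _
        by_cases h : δ = γ₀ <;> simp [hc', h, sub_smul]
      rw [Finset.sum_congr rfl hterm, Finset.sum_sub_distrib,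
        Finset.sum_ite_eq' Δ γ₀ (fun _ => k • γ₀), if_pos hγ₀, ← hrep, hs]
    rcases hbase _ hsβΦ with ⟨d, hd, hdrep⟩ | ⟨d, hd, hdrep⟩
    · exact (hPos _).mpr ⟨hsβΦ, d, hd, hdrep⟩
    · exfalso
      have := aux_unique Δ hind d c' (by rw [← hdrep, ← hrep']) δ₀ hδ₀Δ
      rw [hc'] at this
      simp only [if_neg hδ₀ne] at this
      linarith [hd δ₀]
  · exfalso
    push_neg at hex
    have hβeq : β = c γ₀ • γ₀ := by
      rw [hrep, Finset.sum_eq_single γ₀]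
      · intro δ hδ hδne
        have : c δ = 0 := le_antisymm (hex δ hδ hδne) (hc δ)
        simp [this]
      · intro h; exact absurd hγ₀ h
    rcases hred γ₀ hγΦ (c γ₀) (by rw [← hβeq]; exact hβΦ) with h1 | h1
    · exact hne (by rw [hβeq, h1, one_smul])
    · linarith [hc γ₀]

private lemma aux_sD (Φ : Finset V) (h0 : (0 : V) ∉ Φ)
    (s : V → (V ≃ₗ[ℝ] V))
    (hs : ∀ α x, s α x = x - (2 * ⟪x, α⟫ / ⟪α, α⟫) • α)
    (hmap : ∀ α ∈ Φ, ∀ β ∈ Φ, s α β ∈ Φ)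
    (hred : ∀ α ∈ Φ, ∀ c : ℝ, c • α ∈ Φ → c = 1 ∨ c = -1)
    (Δ : Finset V) (hΔΦ : Δ ⊆ Φ)
    (hind : LinearIndependent ℝ (Subtype.val : {x : V // x ∈ Δ} → V))
    (hbase : ∀ α ∈ Φ,
      (∃ c : V → ℝ, (∀ γ, 0 ≤ c γ) ∧ α = ∑ γ ∈ Δ, c γ • γ) ∨
      (∃ c : V → ℝ, (∀ γ, c γ ≤ 0) ∧ α = ∑ γ ∈ Δ, c γ • γ))
    (Pos : Finset V)
    (hPos : ∀ α, α ∈ Pos ↔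
      α ∈ Φ ∧ ∃ c : V → ℝ, (∀ γ, 0 ≤ c γ) ∧ α = ∑ γ ∈ Δ, c γ • γ)
    {γ₀ : V} (hγ₀ : γ₀ ∈ Δ) :
    s γ₀ (∑ β ∈ Pos, β) = (∑ β ∈ Pos, β) - (2:ℝ) • γ₀ := by
  classical
  have hγΦ : γ₀ ∈ Φ := hΔΦ hγ₀
  have hγ0 : γ₀ ≠ 0 := fun h => h0 (h ▸ hγΦ)
  have hip : ⟪γ₀, γ₀⟫ ≠ 0 := fun h => hγ0 (inner_self_eq_zero.mp h)
  have hγPos : γ₀ ∈ Pos := aux_simple_pos Φ Δ hΔΦ Pos hPos hγ₀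
  have hkey := fun {β} (hβ : β ∈ Pos) (hne : β ≠ γ₀) =>
    aux_key Φ h0 s hs hmap hred Δ hΔΦ hind hbase Pos hPos hγ₀ hβ hne
  have herase : ∑ β ∈ Pos.erase γ₀, s γ₀ β = ∑ β ∈ Pos.erase γ₀, β := by
    refine Finset.sum_nbij' (fun β => s γ₀ β) (fun β => s γ₀ β) ?_ ?_ ?_ ?_ ?_
    · intro a ha
      obtain ⟨ha1, ha2⟩ := Finset.mem_erase.mp ha
      obtain ⟨h1, h2⟩ := hkey ha2 ha1
      exact Finset.mem_erase.mpr ⟨h2, h1⟩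
    · intro a ha
      obtain ⟨ha1, ha2⟩ := Finset.mem_erase.mp ha
      obtain ⟨h1, h2⟩ := hkey ha2 ha1
      exact Finset.mem_erase.mpr ⟨h2, h1⟩
    · intro a _; exact aux_refl_invol s hs γ₀ hip a
    · intro a _; exact aux_refl_invol s hs γ₀ hip a
    · intro a _; rfl
  have hmapD : s γ₀ (∑ β ∈ Pos, β) = ∑ β ∈ Pos, s γ₀ β := map_sum _ _ _
  rw [hmapD, ← Finset.add_sum_erase Pos _ hγPos, ← Finset.add_sum_erase Pos (fun β => β) hγPos,
    herase, aux_refl_self s hs γ₀ hip, two_smul]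
  abel

private lemma aux_D (Φ : Finset V) (h0 : (0 : V) ∉ Φ)
    (s : V → (V ≃ₗ[ℝ] V))
    (hs : ∀ α x, s α x = x - (2 * ⟪x, α⟫ / ⟪α, α⟫) • α)
    (hmap : ∀ α ∈ Φ, ∀ β ∈ Φ, s α β ∈ Φ)
    (hred : ∀ α ∈ Φ, ∀ c : ℝ, c • α ∈ Φ → c = 1 ∨ c = -1)
    (Δ : Finset V) (hΔΦ : Δ ⊆ Φ)
    (hind : LinearIndependent ℝ (Subtype.val : {x : V // x ∈ Δ} → V))
    (hbase : ∀ α ∈ Φ,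
      (∃ c : V → ℝ, (∀ γ, 0 ≤ c γ) ∧ α = ∑ γ ∈ Δ, c γ • γ) ∨
      (∃ c : V → ℝ, (∀ γ, c γ ≤ 0) ∧ α = ∑ γ ∈ Δ, c γ • γ))
    (Pos : Finset V)
    (hPos : ∀ α, α ∈ Pos ↔
      α ∈ Φ ∧ ∃ c : V → ℝ, (∀ γ, 0 ≤ c γ) ∧ α = ∑ γ ∈ Δ, c γ • γ)
    {γ₀ : V} (hγ₀ : γ₀ ∈ Δ) :
    ⟪∑ β ∈ Pos, β, γ₀⟫ = ⟪γ₀, γ₀⟫ := by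
  classical
  have hγΦ : γ₀ ∈ Φ := hΔΦ hγ₀
  have hγ0 : γ₀ ≠ 0 := fun h => h0 (h ▸ hγΦ)
  have hip : ⟪γ₀, γ₀⟫ ≠ 0 := fun h => hγ0 (inner_self_eq_zero.mp h)
  have hmapD := aux_sD Φ h0 s hs hmap hred Δ hΔΦ hind hbase Pos hPos hγ₀
  rw [hs] at hmapD
  have h2 : (2 * ⟪∑ β ∈ Pos, β, γ₀⟫ / ⟪γ₀, γ₀⟫) • γ₀ = (2:ℝ) • γ₀ := by
    have := hmapD
    apply_fun (fun z => (∑ β ∈ Pos, β) - z) at this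
    simpa using this
  have h3 : 2 * ⟪∑ β ∈ Pos, β, γ₀⟫ / ⟪γ₀, γ₀⟫ = 2 :=
    smul_left_injective ℝ hγ0 h2
  field_simp at h3
  linarith

end AuxRootSystem

/-- The length of `w` as a word in the reflections attached (by `s`) to the simple roots
`Δ`. -/
noncomputable def wordLength {V : Type*} [NormedAddCommGroup V] [InnerProductSpace ℝ V]
    (s : V → (V ≃ₗ[ℝ] V)) (Δ : Finset V) (w : V ≃ₗ[ℝ] V) : ℕ :=
  sInf {m | ∃ l : List V, l.length = m ∧ (∀ γ ∈ l, γ ∈ Δ) ∧ (l.map s).prod = w}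

/-- If `v = r_n ⋯ r_1` is a reduced expression in the Weyl group of a finite reduced
crystallographic root system, with `τ_j = (r_1 ⋯ r_{j−1})(γ_j)`, then for each `j`,
`δ(h_{τ_j}) − 1 = Σ_{k<j} ⟨τ_k, τ_j^∨⟩`, where `δ` is the half sum of the positive roots
and `⟨β, α^∨⟩ = 2(β,α)/(α,α)`. -/
theorem half_sum_pairing_of_reduced_expression
    {V : Type*} [NormedAddCommGroup V] [InnerProductSpace ℝ V] [FiniteDimensional ℝ V]
    -- `Φ` is a finite reduced crystallographic root system spanning `V`:
    (Φ : Finset V) (hspan : Submodule.span ℝ (Φ : Set V) = ⊤) (h0 : (0 : V) ∉ Φ)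
    (s : V → (V ≃ₗ[ℝ] V))
    (hs : ∀ α x, s α x = x - (2 * ⟪x, α⟫ / ⟪α, α⟫) • α)
    (hmap : ∀ α ∈ Φ, ∀ β ∈ Φ, s α β ∈ Φ)
    (hcrys : ∀ α ∈ Φ, ∀ β ∈ Φ, ∃ z : ℤ, 2 * ⟪β, α⟫ / ⟪α, α⟫ = (z : ℝ))
    (hred : ∀ α ∈ Φ, ∀ c : ℝ, c • α ∈ Φ → c = 1 ∨ c = -1)
    -- `Δ` is a base of `Φ`, `Pos` the corresponding set of positive roots:
    (Δ : Finset V) (hΔΦ : Δ ⊆ Φ)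
    (hind : LinearIndependent ℝ (Subtype.val : {x : V // x ∈ Δ} → V))
    (hbase : ∀ α ∈ Φ,
      (∃ c : V → ℝ, (∀ γ, 0 ≤ c γ) ∧ α = ∑ γ ∈ Δ, c γ • γ) ∨
      (∃ c : V → ℝ, (∀ γ, c γ ≤ 0) ∧ α = ∑ γ ∈ Δ, c γ • γ))
    (Pos : Finset V)
    (hPos : ∀ α, α ∈ Pos ↔
      α ∈ Φ ∧ ∃ c : V → ℝ, (∀ γ, 0 ≤ c γ) ∧ α = ∑ γ ∈ Δ, c γ • γ)
    -- `v = r_n ⋯ r_1` is a reduced expression, `r_j` the reflection of the simple root `γ_j`: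
    (v : V ≃ₗ[ℝ] V) (n : ℕ)
    (γ : Fin n → V) (hγ : ∀ j, γ j ∈ Δ)
    (hword : ((List.ofFn fun j => s (γ j)).reverse).prod = v)
    (hreduced : wordLength s Δ v = n)
    -- `τ_j = (r_1 r_2 ⋯ r_{j−1})(γ_j)`:
    (τ : Fin n → V)
    (hτ : ∀ j : Fin n,
      τ j = (List.ofFn fun i : Fin j.1 => s (γ ⟨i.1, i.2.trans j.2⟩)).prod (γ j)) :
    ∀ j : Fin n,
      (1 / 2) * (∑ β ∈ Pos, 2 * ⟪β, τ j⟫ / ⟪τ j, τ j⟫) - 1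
        = ∑ k ∈ Finset.univ.filter (fun k : Fin n => k < j),
            2 * ⟪τ k, τ j⟫ / ⟪τ j, τ j⟫ := by
  classical
  intro j
  -- Extended sequence of simple roots indexed by `ℕ`, and prefix products.
  set γ' : ℕ → V := fun i => if h : i < n then γ ⟨i, h⟩ else 0 with hγ'def
  set u : ℕ → (V ≃ₗ[ℝ] V) :=
    fun m => ((List.ofFn (fun i : Fin m => γ' i.1)).map s).prod with hudef
  have hγ'Δ : ∀ i, i < n → γ' i ∈ Δ := by
    intro i h
    simpa [hγ'def, dif_pos h] using hγ ⟨i, h⟩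
  have hlistΔ : ∀ m, m ≤ n → ∀ x ∈ List.ofFn (fun i : Fin m => γ' i.1), x ∈ Δ := by
    intro m hm x hx
    obtain ⟨i, rfl⟩ := List.mem_ofFn.mp hx
    exact hγ'Δ i.1 (lt_of_lt_of_le i.2 hm)
  have hlistΦ : ∀ m, m ≤ n → ∀ x ∈ List.ofFn (fun i : Fin m => γ' i.1), x ∈ Φ :=
    fun m hm x hx => hΔΦ (hlistΔ m hm x hx)
  -- successor formula for prefix products
  have hu_succ : ∀ m, u (m + 1) = u m * s (γ' m) := by
    intro m
    have hofn : (List.ofFn (fun i : Fin (m+1) => γ' i.1))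
        = (List.ofFn (fun i : Fin m => γ' i.1)).concat (γ' m) := by
      rw [List.ofFn_succ']
      rfl
    rw [hudef]
    simp only [hofn, List.map_concat, List.prod_concat]
  -- τ in terms of prefix products
  have hτu : ∀ k : Fin n, τ k = u k.1 (γ' k.1) := by
    intro k
    rw [hτ k, hudef]
    have hlist : (List.ofFn fun i : Fin k.1 => s (γ ⟨i.1, i.2.trans k.2⟩))
        = (List.ofFn (fun i : Fin k.1 => γ' i.1)).map s := by
      rw [List.map_ofFn]
      refine congrArg List.ofFn (funext fun i => ?_)
      have : γ' i.1 = γ ⟨i.1, i.2.trans k.2⟩ := by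
        simp [hγ'def, dif_pos (i.2.trans k.2)]
      simp [Function.comp, this]
    have hγk : γ' k.1 = γ k := by
      simp [hγ'def, dif_pos k.2]
    rw [hlist, hγk]
  -- telescoping identity
  have htel : ∀ m, m ≤ n →
      (∑ β ∈ Pos, β) - u m (∑ β ∈ Pos, β)
        = ∑ k ∈ Finset.range m, (2:ℝ) • (u k (γ' k)) := by
    intro m
    induction m with
    | zero =>
      intro _
      simp [hudef, aux_one_apply]
    | succ m ih =>
      intro hm
      have hm' : m ≤ n := Nat.le_of_succ_le hm
      have hmn : m < n := hm
      have hsD : s (γ' m) (∑ β ∈ Pos, β) = (∑ β ∈ Pos, β) - (2:ℝ) • γ' m :=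
        aux_sD Φ h0 s hs hmap hred Δ hΔΦ hind hbase Pos hPos (hγ'Δ m hmn)
      rw [Finset.sum_range_succ, ← ih hm', hu_succ, aux_mul_apply, hsD, map_sub, map_smul]
      abel
  -- abbreviations
  set t : V := τ j with htdef
  have htu : t = u j.1 (γ' j.1) := hτu j
  have hγ'j : γ' j.1 = γ j := by simp [hγ'def, dif_pos j.2]
  have hγjΦ : γ j ∈ Φ := hΔΦ (hγ j)
  have hγj0 : γ j ≠ 0 := fun h => h0 (h ▸ hγjΦ)
  have hγjip : ⟪γ j, γ j⟫ ≠ 0 := fun h => hγj0 (inner_self_eq_zero.mp h)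
  have htt : ⟪t, t⟫ = ⟪γ j, γ j⟫ := by
    rw [htu, hudef]
    rw [aux_prod_inner Φ h0 s hs _ (hlistΦ j.1 j.2.le) _ _, hγ'j]
  have httne : ⟪t, t⟫ ≠ 0 := by rw [htt]; exact hγjip
  -- inner product of D with t
  have hDt : ⟪∑ β ∈ Pos, β, t⟫
      = (∑ k ∈ Finset.range j.1, 2 * ⟪u k (γ' k), t⟫) + ⟪t, t⟫ := by
    have hsplit : ⟪∑ β ∈ Pos, β, t⟫
        = ⟪(∑ β ∈ Pos, β) - u j.1 (∑ β ∈ Pos, β), t⟫ + ⟪u j.1 (∑ β ∈ Pos, β), t⟫ := by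
      rw [← inner_add_left]
      congr 1
      abel
    have h1 : ⟪(∑ β ∈ Pos, β) - u j.1 (∑ β ∈ Pos, β), t⟫
        = ∑ k ∈ Finset.range j.1, 2 * ⟪u k (γ' k), t⟫ := by
      rw [htel j.1 j.2.le, sum_inner]
      exact Finset.sum_congr rfl fun k _ => by rw [real_inner_smul_left]
    have hiso : ⟪u j.1 (∑ β ∈ Pos, β), u j.1 (γ' j.1)⟫ = ⟪∑ β ∈ Pos, β, γ' j.1⟫ :=
      aux_prod_inner Φ h0 s hs _ (hlistΦ j.1 j.2.le) _ _
    have h2 : ⟪u j.1 (∑ β ∈ Pos, β), t⟫ = ⟪t, t⟫ := by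
      calc ⟪u j.1 (∑ β ∈ Pos, β), t⟫ = ⟪∑ β ∈ Pos, β, γ' j.1⟫ := by rw [htu]; exact hiso
        _ = ⟪t, t⟫ := by
            rw [hγ'j, htt]
            exact aux_D Φ h0 s hs hmap hred Δ hΔΦ hind hbase Pos hPos (hγ j)
    rw [hsplit, h1, h2]
  -- rewrite the RHS as a sum over `range j.1`
  have hRHS : ∑ k ∈ Finset.univ.filter (fun k : Fin n => k < j), 2 * ⟪τ k, t⟫ / ⟪t, t⟫
      = ∑ m ∈ Finset.range j.1, 2 * ⟪u m (γ' m), t⟫ / ⟪t, t⟫ := by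
    refine Finset.sum_bij' (fun k _ => k.1)
      (fun m hm => (⟨m, (Finset.mem_range.mp hm).trans j.2⟩ : Fin n)) ?_ ?_ ?_ ?_ ?_
    · intro k hk
      exact Finset.mem_range.mpr (Finset.mem_filter.mp hk).2
    · intro m hm
      exact Finset.mem_filter.mpr ⟨Finset.mem_univ _, Finset.mem_range.mp hm⟩
    · intro k _; rfl
    · intro m _; rfl
    · intro k _
      rw [hτu k]
  -- rewrite the LHS
  have hLHS : ∑ β ∈ Pos, 2 * ⟪β, t⟫ / ⟪t, t⟫ = 2 * ⟪∑ β ∈ Pos, β, t⟫ / ⟪t, t⟫ := by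
    rw [sum_inner, Finset.mul_sum, ← Finset.sum_div]
  rw [hLHS, hRHS, hDt, ← Finset.sum_div]
  field_simp
  ring
end

section
/- Let n ≥ 1, let σ be a permutation of {1, …, n}, and let S = {(i,j) : 1 ≤ i < j ≤ n, σ(i) > σ(j)} be its inversion set, with complement S^c = {(i,j) : i < j, σ(i) < σ(j)}. Let N be the group of n×n upper unitriangular complex matrices, N₁ = {u ∈ N : u_{ij} = 0 whenever i < j and (i,j) ∉ S}, and N₂ = {u ∈ N : u_{ij} = 0 whenever i < j and (i,j) ∉ S^c}. Then: (i) N₁ and N₂ are subgroups of N and every u ∈ N factors uniquely as u = (u)₁·(u)₂ with (u)₁ ∈ N₁ and (u)₂ ∈ N₂; and (ii) for every fixed u₀ ∈ N, the map N₁ → N₁ given by u ↦ (u₀·u·u₀⁻¹)₁ preserves the measure on N₁ obtained by transporting Lebesgue measure on ℂ^S through the entry coordinates (u_{ij})_{(i,j) ∈ S}. -/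
open Matrix MeasureTheory

variable {n : ℕ}

/-- A matrix is upper unitriangular if it has 1's on the diagonal and 0's below it. -/
def IsUpperUnitriangular (u : Matrix (Fin n) (Fin n) ℂ) : Prop :=
  (∀ i, u i i = 1) ∧ ∀ i j : Fin n, j < i → u i j = 0

/-- The inversion set of a permutation `σ`, as a finset of pairs `(i,j)`, `i < j`,
`σ i > σ j`. -/
def inversionSet (σ : Equiv.Perm (Fin n)) : Finset (Fin n × Fin n) :=
  Finset.univ.filter fun p => p.1 < p.2 ∧ σ p.2 < σ p.1

/-- The pattern subgroup `N₁`: upper unitriangular matrices supported on the inversion set. -/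
def patternN₁ (σ : Equiv.Perm (Fin n)) : Set (Matrix (Fin n) (Fin n) ℂ) :=
  {u | IsUpperUnitriangular u ∧
    ∀ i j : Fin n, i < j → (i, j) ∉ inversionSet σ → u i j = 0}

/-- The complementary pattern subgroup `N₂`: upper unitriangular matrices supported on the
complement of the inversion set. -/
def patternN₂ (σ : Equiv.Perm (Fin n)) : Set (Matrix (Fin n) (Fin n) ℂ) :=
  {u | IsUpperUnitriangular u ∧
    ∀ i j : Fin n, i < j → (i, j) ∈ inversionSet σ → u i j = 0}

/-- The entry coordinates on `N₁`: the unitriangular matrix with entries `x` on the inversion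
set and `0` in the other off-diagonal positions. -/
noncomputable def coordMatrix (σ : Equiv.Perm (Fin n))
    (x : {p // p ∈ inversionSet σ} → ℂ) : Matrix (Fin n) (Fin n) ℂ :=
  Matrix.of fun i j =>
    if i = j then 1 else if h : (i, j) ∈ inversionSet σ then x ⟨(i, j), h⟩ else 0


open Finset

def Supp (P : Fin n × Fin n → Prop) (u : Matrix (Fin n) (Fin n) ℂ) : Prop :=
  IsUpperUnitriangular u ∧ ∀ i j : Fin n, i < j → ¬ P (i, j) → u i j = 0

def Trans' (P : Fin n × Fin n → Prop) : Prop :=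
  ∀ i j k : Fin n, i < j → j < k → P (i, j) → P (j, k) → P (i, k)

lemma supp_one (P : Fin n × Fin n → Prop) : Supp P (1 : Matrix (Fin n) (Fin n) ℂ) := by
  refine ⟨⟨fun i => Matrix.one_apply_eq i, fun i j hij => Matrix.one_apply_ne (by
    exact fun h => absurd h (by rintro rfl; exact lt_irrefl _ hij))⟩, ?_⟩
  intro i j hij _
  exact Matrix.one_apply_ne (ne_of_lt hij)

lemma supp_mul {P : Fin n × Fin n → Prop} (hP : Trans' P)
    {u v : Matrix (Fin n) (Fin n) ℂ} (hu : Supp P u) (hv : Supp P v) : Supp P (u * v) := by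
  classical
  obtain ⟨⟨hud, hul⟩, hus⟩ := hu
  obtain ⟨⟨hvd, hvl⟩, hvs⟩ := hv
  have key : ∀ i j : Fin n, i < j → ¬ P (i, j) → (u * v) i j = 0 := by
    intro i j hij hnp
    rw [Matrix.mul_apply]
    refine Finset.sum_eq_zero fun a _ => ?_
    rcases lt_trichotomy a i with h | h | h
    · rw [hul i a h, zero_mul]
    · rw [h]
      by_cases hP2 : P (i, j)
      · exact absurd hP2 hnp
      · rw [hvs i j hij hP2, mul_zero]
    · rcases lt_trichotomy j a with h2 | h2 | h2
      · rw [hvl a j h2, mul_zero]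
      · rw [← h2]
        by_cases hP1 : P (i, j)
        · exact absurd hP1 hnp
        · rw [hus i j hij hP1, zero_mul]
      · by_cases hP1 : P (i, a)
        · by_cases hP2 : P (a, j)
          · exact absurd (hP i a j h h2 hP1 hP2) hnp
          · rw [hvs a j h2 hP2, mul_zero]
        · rw [hus i a h hP1, zero_mul]
  refine ⟨⟨?_, ?_⟩, key⟩
  · intro i
    rw [Matrix.mul_apply]
    rw [Finset.sum_eq_single i]
    · rw [hud, hvd, one_mul]
    · intro a _ ha
      rcases lt_or_gt_of_ne ha with h | h
      · rw [hul i a h, zero_mul]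
      · rw [hvl a i h, mul_zero]
    · simp
  · intro i j hji
    rw [Matrix.mul_apply]
    refine Finset.sum_eq_zero fun a _ => ?_
    rcases lt_or_ge a i with h | h
    · rw [hul i a h, zero_mul]
    · have : j < a := lt_of_lt_of_le hji h
      rw [hvl a j this, mul_zero]

lemma strict_pow_supp {P : Fin n × Fin n → Prop} (hP : Trans' P)
    {u : Matrix (Fin n) (Fin n) ℂ} (hu : Supp P u) :
    ∀ m : ℕ, ∀ i j : Fin n, ((1 - u) ^ (m + 1)) i j ≠ 0 →
      i < j ∧ P (i, j) ∧ (i : ℕ) + (m + 1) ≤ (j : ℕ) := by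
  obtain ⟨⟨hud, hul⟩, hus⟩ := hu
  have base : ∀ i j : Fin n, (1 - u : Matrix (Fin n) (Fin n) ℂ) i j ≠ 0 →
      i < j ∧ P (i, j) ∧ (i : ℕ) + 1 ≤ (j : ℕ) := by
    intro i j h
    rw [Matrix.sub_apply] at h
    rcases lt_trichotomy i j with hij | hij | hij
    · refine ⟨hij, ?_, by omega⟩
      by_contra hnp
      exact h (by rw [hus i j hij hnp, Matrix.one_apply_ne (ne_of_lt hij), sub_zero])
    · subst hij; exact absurd (by rw [hud, Matrix.one_apply_eq, sub_self]) h
    · exact absurd (by rw [hul i j hij, Matrix.one_apply_ne (ne_of_gt hij), sub_zero]) h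
  intro m
  induction m with
  | zero => simpa using base
  | succ m ih =>
    intro i j h
    rw [pow_succ, Matrix.mul_apply] at h
    obtain ⟨a, _, ha⟩ := Finset.exists_ne_zero_of_sum_ne_zero h
    have h1 := ih i a (left_ne_zero_of_mul ha)
    have h2 := base a j (right_ne_zero_of_mul ha)
    exact ⟨lt_trans h1.1 h2.1, hP i a j h1.1 h2.1 h1.2.1 h2.2.1,
      by omega⟩

lemma supp_inv {P : Fin n × Fin n → Prop} (hP : Trans' P)
    {u : Matrix (Fin n) (Fin n) ℂ} (hu : Supp P u) :
    ∃ v : Matrix (Fin n) (Fin n) ℂ, Supp P v ∧ u * v = 1 ∧ v * u = 1 := by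
  classical
  set N : Matrix (Fin n) (Fin n) ℂ := 1 - u with hN
  have hNpow := strict_pow_supp hP hu
  have hNn : N ^ (n + 1) = 0 := by
    ext i j
    by_contra h
    have := hNpow n i j h
    omega
  refine ⟨∑ m ∈ Finset.range (n + 1), N ^ m, ?_, ?_, ?_⟩
  · constructor
    · constructor
      · intro i
        rw [Matrix.sum_apply]
        rw [Finset.sum_eq_single 0]
        · simp
        · intro m _ hm
          obtain ⟨m', rfl⟩ := Nat.exists_eq_succ_of_ne_zero hm
          by_contra h
          exact absurd (hNpow m' i i h).1 (lt_irrefl _)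
        · simp
      · intro i j hji
        rw [Matrix.sum_apply]
        refine Finset.sum_eq_zero fun m _ => ?_
        rcases Nat.eq_zero_or_pos m with rfl | hm
        · simp [Matrix.one_apply_ne (ne_of_gt hji)]
        · obtain ⟨m', rfl⟩ := Nat.exists_eq_succ_of_ne_zero (Nat.pos_iff_ne_zero.mp hm)
          by_contra h
          exact absurd (hNpow m' i j h).1 (asymm hji)
    · intro i j hij hnp
      rw [Matrix.sum_apply]
      refine Finset.sum_eq_zero fun m _ => ?_
      rcases Nat.eq_zero_or_pos m with rfl | hm
      · simp [Matrix.one_apply_ne (ne_of_lt hij)]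
      · obtain ⟨m', rfl⟩ := Nat.exists_eq_succ_of_ne_zero (Nat.pos_iff_ne_zero.mp hm)
        by_contra h
        exact absurd (hNpow m' i j h).2.1 hnp
  · have := mul_neg_geom_sum N (n + 1)
    rw [hNn, sub_zero] at this
    have hu' : (1 : Matrix (Fin n) (Fin n) ℂ) - N = u := by rw [hN, sub_sub_cancel]
    rw [← hu']
    exact this
  · have := geom_sum_mul_neg N (n + 1)
    rw [hNn, sub_zero] at this
    have hu' : (1 : Matrix (Fin n) (Fin n) ℂ) - N = u := by rw [hN, sub_sub_cancel]
    rw [← hu']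
    exact this

noncomputable def cEnt (S : Finset (Fin n × Fin n)) (u : Matrix (Fin n) (Fin n) ℂ)
    (i j : Fin n) : ℂ :=
  u i j - ∑ a ∈ (Finset.Ioo i j).attach,
    (if (i, a.1) ∈ S then cEnt S u i a.1 else 0) *
      (if (a.1, j) ∈ S then 0 else cEnt S u a.1 j)
termination_by (j : ℕ) - (i : ℕ)
decreasing_by
  · have h1 := (Finset.mem_Ioo.mp a.2).1
    have h2 := (Finset.mem_Ioo.mp a.2).2
    have h1' : (i : ℕ) < a.1 := h1
    have h2' : (a.1 : ℕ) < j := h2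
    omega
  · have h1 := (Finset.mem_Ioo.mp a.2).1
    have h2 := (Finset.mem_Ioo.mp a.2).2
    have h1' : (i : ℕ) < a.1 := h1
    have h2' : (a.1 : ℕ) < j := h2
    omega

noncomputable def fact1 (S : Finset (Fin n × Fin n)) (u : Matrix (Fin n) (Fin n) ℂ) :
    Matrix (Fin n) (Fin n) ℂ :=
  Matrix.of fun i j => if i = j then 1 else if i < j ∧ (i, j) ∈ S then cEnt S u i j else 0

noncomputable def fact2 (S : Finset (Fin n × Fin n)) (u : Matrix (Fin n) (Fin n) ℂ) :
    Matrix (Fin n) (Fin n) ℂ :=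
  Matrix.of fun i j => if i = j then 1 else if i < j ∧ (i, j) ∉ S then cEnt S u i j else 0

lemma fact1_apply (S : Finset (Fin n × Fin n)) (u : Matrix (Fin n) (Fin n) ℂ) (i j : Fin n) :
    fact1 S u i j = if i = j then 1 else if i < j ∧ (i, j) ∈ S then cEnt S u i j else 0 := rfl

lemma fact2_apply (S : Finset (Fin n × Fin n)) (u : Matrix (Fin n) (Fin n) ℂ) (i j : Fin n) :
    fact2 S u i j = if i = j then 1 else if i < j ∧ (i, j) ∉ S then cEnt S u i j else 0 := rfl

lemma fact1_supp (S : Finset (Fin n × Fin n)) (u : Matrix (Fin n) (Fin n) ℂ) :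
    Supp (fun p => p ∈ S) (fact1 S u) := by
  refine ⟨⟨fun i => by simp [fact1_apply], ?_⟩, ?_⟩
  · intro i j hji
    rw [fact1_apply, if_neg (ne_of_gt hji), if_neg (by rintro ⟨h, -⟩; exact asymm hji h)]
  · intro i j hij hns
    rw [fact1_apply, if_neg (ne_of_lt hij), if_neg (by rintro ⟨-, h⟩; exact hns h)]

lemma fact2_supp (S : Finset (Fin n × Fin n)) (u : Matrix (Fin n) (Fin n) ℂ) :
    Supp (fun p => p ∉ S) (fact2 S u) := by
  refine ⟨⟨fun i => by simp [fact2_apply], ?_⟩, ?_⟩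
  · intro i j hji
    rw [fact2_apply, if_neg (ne_of_gt hji), if_neg (by rintro ⟨h, -⟩; exact asymm hji h)]
  · intro i j hij hns
    rw [fact2_apply, if_neg (ne_of_lt hij), if_neg (by rintro ⟨-, h⟩; exact hns h)]

lemma fact_mul (S : Finset (Fin n × Fin n)) {u : Matrix (Fin n) (Fin n) ℂ}
    (hu : IsUpperUnitriangular u) : fact1 S u * fact2 S u = u := by
  classical
  ext i j
  rw [Matrix.mul_apply]
  rcases lt_trichotomy i j with hij | hij | hij
  · -- i < j
    have hIcc : ∀ a : Fin n, a ∉ Finset.Icc i j → fact1 S u i a * fact2 S u a j = 0 := by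
      intro a ha
      rw [Finset.mem_Icc, not_and_or] at ha
      rcases ha with ha | ha
      · rw [(fact1_supp S u).1.2 i a (lt_of_not_ge ha), zero_mul]
      · rw [(fact2_supp S u).1.2 a j (lt_of_not_ge ha), mul_zero]
    rw [← Finset.sum_subset (Finset.subset_univ (Finset.Icc i j))
      (fun a _ ha => hIcc a ha)]
    rw [Finset.Icc_eq_cons_Ioc (le_of_lt hij), Finset.sum_cons]
    rw [← Finset.Ioo_insert_right hij, Finset.sum_insert Finset.right_notMem_Ioo]
    have e1 : fact1 S u i i * fact2 S u i j = fact2 S u i j := by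
      rw [(fact1_supp S u).1.1, one_mul]
    have e2 : fact1 S u i j * fact2 S u j j = fact1 S u i j := by
      rw [(fact2_supp S u).1.1, mul_one]
    rw [e1, e2]
    have e3 : ∀ a ∈ Finset.Ioo i j, fact1 S u i a * fact2 S u a j =
        (if (i, a) ∈ S then cEnt S u i a else 0) * (if (a, j) ∈ S then 0 else cEnt S u a j) := by
      intro a ha
      rw [Finset.mem_Ioo] at ha
      rw [fact1_apply, fact2_apply, if_neg (ne_of_lt ha.1), if_neg (ne_of_lt ha.2)]
      congr 1
      · by_cases h : (i, a) ∈ S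
        · rw [if_pos ⟨ha.1, h⟩, if_pos h]
        · rw [if_neg (by rintro ⟨-, hh⟩; exact h hh), if_neg h]
      · by_cases h : (a, j) ∈ S
        · rw [if_neg (by rintro ⟨-, hh⟩; exact hh h), if_pos h]
        · rw [if_pos ⟨ha.2, h⟩, if_neg h]
    rw [Finset.sum_congr rfl e3]
    have e4 : fact2 S u i j + fact1 S u i j = cEnt S u i j := by
      rw [fact1_apply, fact2_apply, if_neg (ne_of_lt hij), if_neg (ne_of_lt hij)]
      by_cases h : (i, j) ∈ S
      · rw [if_neg (by rintro ⟨-, hh⟩; exact hh h), if_pos ⟨hij, h⟩, zero_add]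
      · rw [if_pos ⟨hij, h⟩, if_neg (by rintro ⟨-, hh⟩; exact h hh), add_zero]
    have e5 : ∑ a ∈ Finset.Ioo i j,
        (if (i, a) ∈ S then cEnt S u i a else 0) * (if (a, j) ∈ S then 0 else cEnt S u a j) =
        ∑ a ∈ (Finset.Ioo i j).attach,
        (if (i, a.1) ∈ S then cEnt S u i a.1 else 0) *
          (if (a.1, j) ∈ S then 0 else cEnt S u a.1 j) := (Finset.sum_attach _ _).symm
    rw [← add_assoc, e4, e5]
    rw [cEnt]
    ring
  · -- i = j
    subst hij
    rw [Finset.sum_eq_single i]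
    · rw [(fact1_supp S u).1.1, (fact2_supp S u).1.1, one_mul, hu.1]
    · intro a _ ha
      rcases lt_or_gt_of_ne ha with h | h
      · rw [(fact1_supp S u).1.2 i a h, zero_mul]
      · rw [(fact2_supp S u).1.2 a i h, mul_zero]
    · simp
  · -- j < i
    rw [hu.2 i j hij]
    refine Finset.sum_eq_zero fun a _ => ?_
    rcases lt_or_ge a i with h | h
    · rw [(fact1_supp S u).1.2 i a h, zero_mul]
    · rw [(fact2_supp S u).1.2 a j (lt_of_lt_of_le hij h), mul_zero]

lemma inversionSet_mem_iff (σ : Equiv.Perm (Fin n)) (p : Fin n × Fin n) :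
    p ∈ inversionSet σ ↔ p.1 < p.2 ∧ σ p.2 < σ p.1 := by
  simp [inversionSet]

lemma trans_inv (σ : Equiv.Perm (Fin n)) : Trans' (fun p => p ∈ inversionSet σ) := by
  intro i j k hij hjk h1 h2
  rw [inversionSet_mem_iff] at *
  exact ⟨lt_trans hij hjk, lt_trans h2.2 h1.2⟩

lemma trans_compl (σ : Equiv.Perm (Fin n)) : Trans' (fun p => p ∉ inversionSet σ) := by
  intro i j k hij hjk h1 h2
  rw [inversionSet_mem_iff] at h1 h2
  rw [inversionSet_mem_iff]
  rintro ⟨-, hlt⟩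
  have e1 : σ i < σ j := by
    rcases lt_or_ge (σ i) (σ j) with h | h
    · exact h
    · rcases lt_or_eq_of_le h with h | h
      · exact absurd ⟨hij, h⟩ h1
      · exact absurd (σ.injective h) (ne_of_gt hij)
  have e2 : σ j < σ k := by
    rcases lt_or_ge (σ j) (σ k) with h | h
    · exact h
    · rcases lt_or_eq_of_le h with h | h
      · exact absurd ⟨hjk, h⟩ h2
      · exact absurd (σ.injective h) (ne_of_gt hjk)
  exact absurd (lt_trans e1 e2) (asymm hlt)

lemma mem_N1_iff (σ : Equiv.Perm (Fin n)) (u : Matrix (Fin n) (Fin n) ℂ) :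
    u ∈ patternN₁ σ ↔ Supp (fun p => p ∈ inversionSet σ) u := Iff.rfl

lemma mem_N2_iff (σ : Equiv.Perm (Fin n)) (u : Matrix (Fin n) (Fin n) ℂ) :
    u ∈ patternN₂ σ ↔ Supp (fun p => p ∉ inversionSet σ) u := by
  constructor
  · rintro ⟨h1, h2⟩
    exact ⟨h1, fun i j hij hns => h2 i j hij (not_not.mp hns)⟩
  · rintro ⟨h1, h2⟩
    exact ⟨h1, fun i j hij hs => h2 i j hij (not_not.mpr hs)⟩

lemma inter_eq_one (σ : Equiv.Perm (Fin n)) {w : Matrix (Fin n) (Fin n) ℂ}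
    (h1 : Supp (fun p => p ∈ inversionSet σ) w) (h2 : Supp (fun p => p ∉ inversionSet σ) w) :
    w = 1 := by
  classical
  ext i j
  rcases lt_trichotomy i j with hij | hij | hij
  · rw [Matrix.one_apply_ne (ne_of_lt hij)]
    by_cases hs : (i, j) ∈ inversionSet σ
    · exact h2.2 i j hij (not_not.mpr hs)
    · exact h1.2 i j hij hs
  · subst hij; rw [Matrix.one_apply_eq, h1.1.1]
  · rw [Matrix.one_apply_ne (ne_of_gt hij), h1.1.2 i j hij]

lemma fact_unique (σ : Equiv.Perm (Fin n)) {u w₁ w₂ : Matrix (Fin n) (Fin n) ℂ}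
    (hu : IsUpperUnitriangular u) (h1 : w₁ ∈ patternN₁ σ) (h2 : w₂ ∈ patternN₂ σ)
    (heq : u = w₁ * w₂) : w₁ = fact1 (inversionSet σ) u ∧ w₂ = fact2 (inversionSet σ) u := by
  have hf1 := fact1_supp (inversionSet σ) u
  have hf2 := fact2_supp (inversionSet σ) u
  have hmul := fact_mul (inversionSet σ) hu
  rw [mem_N1_iff] at h1
  rw [mem_N2_iff] at h2
  obtain ⟨v₁, hv₁, hv₁l, hv₁r⟩ := supp_inv (trans_inv σ) h1
  obtain ⟨v₂, hv₂, hv₂l, hv₂r⟩ := supp_inv (trans_compl σ) (fact2_supp (inversionSet σ) u)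
  have key : v₁ * fact1 (inversionSet σ) u = w₂ * v₂ := by
    have : w₁ * w₂ = fact1 (inversionSet σ) u * fact2 (inversionSet σ) u := by
      rw [← heq, hmul]
    calc v₁ * fact1 (inversionSet σ) u
        = v₁ * fact1 (inversionSet σ) u * (fact2 (inversionSet σ) u * v₂) := by
          rw [hv₂l, mul_one]
      _ = v₁ * (fact1 (inversionSet σ) u * fact2 (inversionSet σ) u) * v₂ := by
          noncomm_ring
      _ = v₁ * (w₁ * w₂) * v₂ := by rw [this]
      _ = (v₁ * w₁) * w₂ * v₂ := by noncomm_ring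
      _ = w₂ * v₂ := by rw [hv₁r, one_mul]
  have hone : v₁ * fact1 (inversionSet σ) u = 1 := by
    apply inter_eq_one σ
    · exact supp_mul (trans_inv σ) hv₁ hf1
    · rw [key]
      exact supp_mul (trans_compl σ) h2 hv₂
  have e1 : w₁ = fact1 (inversionSet σ) u := by
    calc w₁ = w₁ * (v₁ * fact1 (inversionSet σ) u) := by rw [hone, mul_one]
      _ = (w₁ * v₁) * fact1 (inversionSet σ) u := by noncomm_ring
      _ = fact1 (inversionSet σ) u := by rw [hv₁l, one_mul]
  refine ⟨e1, ?_⟩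
  have e2 : w₂ = fact2 (inversionSet σ) u := by
    have h' : w₁ * w₂ = w₁ * fact2 (inversionSet σ) u := by
      rw [← heq, e1, hmul]
    calc w₂ = (v₁ * w₁) * w₂ := by rw [hv₁r, one_mul]
      _ = v₁ * (w₁ * w₂) := by noncomm_ring
      _ = v₁ * (w₁ * fact2 (inversionSet σ) u) := by rw [h']
      _ = (v₁ * w₁) * fact2 (inversionSet σ) u := by noncomm_ring
      _ = fact2 (inversionSet σ) u := by rw [hv₁r, one_mul]
  exact e2

section Shear

lemma shear_aux : ∀ (k : ℕ) (ι : Type) (_ : Fintype ι) (r : ι → ℕ), (∀ p, r p < k) →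
    ∀ F : (ι → ℂ) → (ι → ℂ), Measurable F →
    (∀ (p : ι) (x y : ι → ℂ), (∀ q, r q < r p → x q = y q) → F x p - x p = F y p - y p) →
    Measure.map F volume = volume := by
  intro k
  induction k with
  | zero =>
    intro ι _ r hr F hF hdep
    have : F = id := funext fun x => funext fun p => absurd (hr p) (Nat.not_lt_zero _)
    rw [this, Measure.map_id]
  | succ k ih =>
    intro ι _ r hr F hF hdep
    let e := MeasurableEquiv.piEquivPiSubtypeProd (fun _ : ι => ℂ) (fun p => r p < k)
    have he : MeasurePreserving e volume volume :=
      volume_preserving_piEquivPiSubtypeProd (fun _ : ι => ℂ) (fun p => r p < k)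
    let F' : ({p : ι // r p < k} → ℂ) → ({p : ι // r p < k} → ℂ) :=
      fun a p => F (e.symm (a, 0)) p.1
    let g : ({p : ι // r p < k} → ℂ) → ({p : ι // ¬ r p < k} → ℂ) :=
      fun a p => F (e.symm (a, 0)) p.1
    have hesymm_app_mem : ∀ (a : {p : ι // r p < k} → ℂ) (b : {p : ι // ¬ r p < k} → ℂ)
        (q : ι) (h : r q < k), e.symm (a, b) q = a ⟨q, h⟩ := by
      intro a b q h
      show (Equiv.piEquivPiSubtypeProd (fun p : ι => r p < k) (fun _ => ℂ)).symm (a, b) q = _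
      simp [Equiv.piEquivPiSubtypeProd, dif_pos h]
    have hesymm_app_nmem : ∀ (a : {p : ι // r p < k} → ℂ) (b : {p : ι // ¬ r p < k} → ℂ)
        (q : ι) (h : ¬ r q < k), e.symm (a, b) q = b ⟨q, h⟩ := by
      intro a b q h
      show (Equiv.piEquivPiSubtypeProd (fun p : ι => r p < k) (fun _ => ℂ)).symm (a, b) q = _
      simp [Equiv.piEquivPiSubtypeProd, dif_neg h]
    have he_app : ∀ (x : ι → ℂ) (p : {p : ι // r p < k}), (e x).1 p = x p.1 := fun _ _ => rfl
    have he_app2 : ∀ (x : ι → ℂ) (p : {p : ι // ¬ r p < k}), (e x).2 p = x p.1 := fun _ _ => rfl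
    -- the key pointwise structure
    have key : ∀ x : ι → ℂ, F x = e.symm (F' (e x).1, (e x).2 + g (e x).1) := by
      intro x
      funext p
      by_cases hp : r p < k
      · rw [hesymm_app_mem _ _ p hp]
        have hagree : ∀ q, r q < r p → x q = e.symm ((e x).1, 0) q := by
          intro q hq
          rw [hesymm_app_mem _ _ q (lt_trans hq hp), he_app]
        have hd := hdep p x (e.symm ((e x).1, 0)) hagree
        have hxp : e.symm ((e x).1, (0 : {p : ι // ¬ r p < k} → ℂ)) p = x p := by
          rw [hesymm_app_mem _ _ p hp, he_app]
        rw [hxp] at hd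
        have hFx : F x p = F (e.symm ((e x).1, 0)) p := by linear_combination hd
        rw [hFx]
      · rw [hesymm_app_nmem _ _ p hp]
        have hagree : ∀ q, r q < r p → x q = e.symm ((e x).1, 0) q := by
          intro q hq
          have hrp : r p = k := by have := hr p; omega
          rw [hesymm_app_mem _ _ q (by omega : r q < k), he_app]
        have hd := hdep p x (e.symm ((e x).1, 0)) hagree
        have hxp : e.symm ((e x).1, (0 : {p : ι // ¬ r p < k} → ℂ)) p = 0 := by
          rw [hesymm_app_nmem _ _ p hp]; rfl
        rw [hxp, sub_zero] at hd
        have hFx : F x p = x p + F (e.symm ((e x).1, 0)) p := by linear_combination hd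
        rw [hFx, Pi.add_apply, he_app2]
    -- measurability
    have hmk : Measurable fun a : {p : ι // r p < k} → ℂ =>
        e.symm ((a, 0) : ({p : ι // r p < k} → ℂ) × ({p : ι // ¬ r p < k} → ℂ)) :=
      e.symm.measurable.comp (measurable_id.prodMk measurable_const)
    have hF' : Measurable F' := by
      apply measurable_pi_lambda
      intro p
      exact (measurable_pi_apply p.1).comp (hF.comp hmk)
    have hg : Measurable g := by
      apply measurable_pi_lambda
      intro p
      exact (measurable_pi_apply p.1).comp (hF.comp hmk)
    let G : ({p : ι // r p < k} → ℂ) × ({p : ι // ¬ r p < k} → ℂ) →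
        ({p : ι // r p < k} → ℂ) × ({p : ι // ¬ r p < k} → ℂ) :=
      fun ab => (F' ab.1, ab.2 + g ab.1)
    have hG : Measurable G :=
      (hF'.comp measurable_fst).prodMk (measurable_snd.add (hg.comp measurable_fst))
    have hFeG : F = e.symm ∘ G ∘ e := by
      funext x
      exact key x
    -- F' preserves volume by induction
    have hmapF' : Measure.map F' volume = volume := by
      refine ih {p : ι // r p < k} inferInstance (fun p => r p.1) (fun p => p.2) F' hF' ?_
      intro p a a' hagree
      have hx : ∀ q, r q < r p.1 →
          e.symm ((a, 0) : ({p : ι // r p < k} → ℂ) × ({p : ι // ¬ r p < k} → ℂ)) q =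
          e.symm ((a', 0) : ({p : ι // r p < k} → ℂ) × ({p : ι // ¬ r p < k} → ℂ)) q := by
        intro q hq
        have hqk : r q < k := lt_trans hq p.2
        rw [hesymm_app_mem _ _ q hqk, hesymm_app_mem _ _ q hqk]
        exact hagree ⟨q, hqk⟩ hq
      have hd := hdep p.1 (e.symm (a, 0)) (e.symm (a', 0)) hx
      have h1 : e.symm ((a, 0) : ({p : ι // r p < k} → ℂ) × ({p : ι // ¬ r p < k} → ℂ)) p.1
          = a p := by
        rw [hesymm_app_mem _ _ p.1 p.2]
      have h2 : e.symm ((a', 0) : ({p : ι // r p < k} → ℂ) × ({p : ι // ¬ r p < k} → ℂ)) p.1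
          = a' p := by
        rw [hesymm_app_mem _ _ p.1 p.2]
      rw [h1, h2] at hd
      exact hd
    -- G preserves product volume
    have hmapG : Measure.map G volume = volume := by
      rw [(by rfl : (volume : Measure (({p : ι // r p < k} → ℂ) × ({p : ι // ¬ r p < k} → ℂ)))
        = Measure.prod volume volume)]
      ext s hs
      rw [Measure.map_apply hG hs, Measure.prod_apply (hG hs), Measure.prod_apply hs]
      have hsec : ∀ a : {p : ι // r p < k} → ℂ,
          (volume : Measure ({p : ι // ¬ r p < k} → ℂ)) (Prod.mk a ⁻¹' (G ⁻¹' s)) =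
          (volume : Measure ({p : ι // ¬ r p < k} → ℂ)) (Prod.mk (F' a) ⁻¹' s) := by
        intro a
        have hset : Prod.mk a ⁻¹' (G ⁻¹' s) =
            (fun b : {p : ι // ¬ r p < k} → ℂ => g a + b) ⁻¹' (Prod.mk (F' a) ⁻¹' s) := by
          ext b
          simp only [Set.mem_preimage, G]
          rw [add_comm (g a) b]
        rw [hset, measure_preimage_add]
      simp_rw [hsec]
      have hH : Measurable fun c : {p : ι // r p < k} → ℂ =>
          (volume : Measure ({p : ι // ¬ r p < k} → ℂ)) (Prod.mk c ⁻¹' s) :=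
        measurable_measure_prodMk_left hs
      calc ∫⁻ a, (volume : Measure ({p : ι // ¬ r p < k} → ℂ)) (Prod.mk (F' a) ⁻¹' s) ∂volume
          = ∫⁻ c, (volume : Measure ({p : ι // ¬ r p < k} → ℂ)) (Prod.mk c ⁻¹' s)
              ∂(Measure.map F' volume) := (lintegral_map hH hF').symm
        _ = ∫⁻ c, (volume : Measure ({p : ι // ¬ r p < k} → ℂ)) (Prod.mk c ⁻¹' s) ∂volume := by
            rw [hmapF']
    have hmpG : MeasurePreserving G volume volume := ⟨hG, hmapG⟩
    have hfin := ((he.symm e).comp (hmpG.comp he)).map_eq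
    rwa [← hFeG] at hfin

end Shear

section Main

variable (σ : Equiv.Perm (Fin n))

lemma coord_apply_diag (x : {p // p ∈ inversionSet σ} → ℂ) (i : Fin n) :
    coordMatrix σ x i i = 1 := by
  show (if i = i then 1 else _) = 1
  rw [if_pos rfl]

lemma coord_apply_mem (x : {p // p ∈ inversionSet σ} → ℂ) (i j : Fin n)
    (h : (i, j) ∈ inversionSet σ) : coordMatrix σ x i j = x ⟨(i, j), h⟩ := by
  have hij : i < j := ((inversionSet_mem_iff σ _).mp h).1
  show (if i = j then 1 else if h' : (i, j) ∈ inversionSet σ then x ⟨(i, j), h'⟩ else 0) = _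
  rw [if_neg (ne_of_lt hij), dif_pos h]

lemma coord_apply_nmem (x : {p // p ∈ inversionSet σ} → ℂ) {i j : Fin n} (hne : i ≠ j)
    (h : (i, j) ∉ inversionSet σ) : coordMatrix σ x i j = 0 := by
  show (if i = j then 1 else if h' : (i, j) ∈ inversionSet σ then x ⟨(i, j), h'⟩ else 0) = 0
  rw [if_neg hne, dif_neg h]

lemma coord_mem_N1 (x : {p // p ∈ inversionSet σ} → ℂ) : coordMatrix σ x ∈ patternN₁ σ := by
  rw [mem_N1_iff]
  refine ⟨⟨coord_apply_diag σ x, ?_⟩, ?_⟩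
  · intro i j hji
    refine coord_apply_nmem σ x (ne_of_gt hji) ?_
    intro hmem
    exact absurd ((inversionSet_mem_iff σ _).mp hmem).1 (asymm hji)
  · intro i j hij hns
    exact coord_apply_nmem σ x (ne_of_lt hij) hns

lemma meas_coordEntry (a b : Fin n) : Measurable fun x : {p // p ∈ inversionSet σ} → ℂ =>
    coordMatrix σ x a b := by
  by_cases hab : a = b
  · simp only [coordMatrix, Matrix.of_apply, if_pos hab]
    exact measurable_const
  · simp only [coordMatrix, Matrix.of_apply, if_neg hab]
    by_cases hS : (a, b) ∈ inversionSet σ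
    · simp only [dif_pos hS]
      exact measurable_pi_apply _
    · simp only [dif_neg hS]
      exact measurable_const

lemma meas_cEnt {α : Type*} [MeasurableSpace α] (S : Finset (Fin n × Fin n))
    (g : α → Matrix (Fin n) (Fin n) ℂ) (hg : ∀ i j, Measurable fun t => g t i j) :
    ∀ (k : ℕ) (i j : Fin n), (j : ℕ) - (i : ℕ) ≤ k → Measurable fun t => cEnt S (g t) i j := by
  have hrw : ∀ (i j : Fin n), (fun t => cEnt S (g t) i j) = fun t => g t i j -
      ∑ a ∈ Finset.Ioo i j,
        (if (i, a) ∈ S then cEnt S (g t) i a else 0) *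
          (if (a, j) ∈ S then 0 else cEnt S (g t) a j) :=
    fun i j => funext fun t => by
      rw [cEnt]
      congr 1
      exact Finset.sum_attach (Finset.Ioo i j) (fun a =>
        (if (i, a) ∈ S then cEnt S (g t) i a else 0) *
          (if (a, j) ∈ S then 0 else cEnt S (g t) a j))
  intro k
  induction k with
  | zero =>
    intro i j hk
    have hIoo : Finset.Ioo i j = ∅ := by
      apply Finset.Ioo_eq_empty
      intro hlt
      have h1 : (i : ℕ) < j := hlt
      omega
    rw [hrw i j]
    simp only [hIoo, Finset.sum_empty, sub_zero]
    exact hg i j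
  | succ k ih =>
    intro i j hk
    rw [hrw i j]
    apply Measurable.sub (hg i j)
    apply Finset.measurable_sum
    intro a haIoo
    have ha := Finset.mem_Ioo.mp haIoo
    have h1 : (i : ℕ) < a := ha.1
    have h2 : (a : ℕ) < j := ha.2
    apply Measurable.mul
    · by_cases hS : (i, a) ∈ S
      · simp only [if_pos hS]
        exact ih i a (by omega)
      · simp only [if_neg hS]
        exact measurable_const
    · by_cases hS : (a, j) ∈ S
      · simp only [if_pos hS]
        exact measurable_const
      · simp only [if_neg hS]
        exact ih a j (by omega)

lemma cEnt_conj_dep {L R : Matrix (Fin n) (Fin n) ℂ}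
    (hL : IsUpperUnitriangular L) (hR : IsUpperUnitriangular R) :
    ∀ (k : ℕ) (i j : Fin n), i < j → (j : ℕ) - (i : ℕ) ≤ k →
    ∀ x y : {p // p ∈ inversionSet σ} → ℂ,
    (∀ q : {p // p ∈ inversionSet σ}, ((q.1.2 : ℕ) - (q.1.1 : ℕ)) < (j : ℕ) - (i : ℕ) →
      x q = y q) →
    cEnt (inversionSet σ) (L * coordMatrix σ x * R) i j - coordMatrix σ x i j =
    cEnt (inversionSet σ) (L * coordMatrix σ y * R) i j - coordMatrix σ y i j := by
  intro k
  induction k with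
  | zero =>
    intro i j hij hk
    have h1 : (i : ℕ) < j := hij
    omega
  | succ k ih =>
    intro i j hij hk x y hxy
    have ex : cEnt (inversionSet σ) (L * coordMatrix σ x * R) i j =
        (L * coordMatrix σ x * R) i j - ∑ a ∈ (Finset.Ioo i j).attach,
          (if (i, a.1) ∈ inversionSet σ then
            cEnt (inversionSet σ) (L * coordMatrix σ x * R) i a.1 else 0) *
          (if (a.1, j) ∈ inversionSet σ then 0 else
            cEnt (inversionSet σ) (L * coordMatrix σ x * R) a.1 j) := by
      rw [cEnt]
    have ey : cEnt (inversionSet σ) (L * coordMatrix σ y * R) i j =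
        (L * coordMatrix σ y * R) i j - ∑ a ∈ (Finset.Ioo i j).attach,
          (if (i, a.1) ∈ inversionSet σ then
            cEnt (inversionSet σ) (L * coordMatrix σ y * R) i a.1 else 0) *
          (if (a.1, j) ∈ inversionSet σ then 0 else
            cEnt (inversionSet σ) (L * coordMatrix σ y * R) a.1 j) := by
      rw [cEnt]
    rw [ex, ey]
    -- claim A
    have expand : ∀ z : {p // p ∈ inversionSet σ} → ℂ, (L * coordMatrix σ z * R) i j
        = ∑ b : Fin n, ∑ a : Fin n, L i a * coordMatrix σ z a b * R b j := by
      intro z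
      rw [Matrix.mul_apply]
      refine Finset.sum_congr rfl fun b _ => ?_
      rw [Matrix.mul_apply, Finset.sum_mul]
    have keyterm : ∀ a b : Fin n, ¬ (a = i ∧ b = j) →
        L i a * coordMatrix σ x a b * R b j = L i a * coordMatrix σ y a b * R b j := by
      intro a b hab
      by_cases hC : coordMatrix σ x a b = coordMatrix σ y a b
      · rw [hC]
      · have hne : a ≠ b := by
          rintro rfl
          exact hC (by rw [coord_apply_diag, coord_apply_diag])
        have hS : (a, b) ∈ inversionSet σ := by
          by_contra hS
          exact hC (by rw [coord_apply_nmem σ x hne hS, coord_apply_nmem σ y hne hS])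
        have hab' := (inversionSet_mem_iff σ _).mp hS
        have hxyab : ¬ ((b : ℕ) - (a : ℕ) < (j : ℕ) - (i : ℕ)) := by
          intro hlt
          exact hC (by
            rw [coord_apply_mem σ x _ _ hS, coord_apply_mem σ y _ _ hS,
              hxy ⟨(a, b), hS⟩ hlt])
        rcases lt_or_ge a i with h | h
        · rw [hL.2 i a h]; ring
        rcases lt_or_ge j b with h' | h'
        · rw [hR.2 b j h']; ring
        exfalso
        have hai : (i : ℕ) ≤ a := h
        have hbj : (b : ℕ) ≤ j := h'
        have hab2 : (a : ℕ) < b := hab'.1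
        have hval : (a : ℕ) = (i : ℕ) ∧ (b : ℕ) = (j : ℕ) := by omega
        exact hab ⟨Fin.ext hval.1, Fin.ext hval.2⟩
    have hA : (L * coordMatrix σ x * R) i j - coordMatrix σ x i j
        = (L * coordMatrix σ y * R) i j - coordMatrix σ y i j := by
      have hsum : ∑ b : Fin n, ∑ a : Fin n, L i a * coordMatrix σ x a b * R b j
          - ∑ b : Fin n, ∑ a : Fin n, L i a * coordMatrix σ y a b * R b j
          = coordMatrix σ x i j - coordMatrix σ y i j := by
        rw [← Finset.sum_sub_distrib]
        have hinner : ∀ b : Fin n,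
            (∑ a : Fin n, L i a * coordMatrix σ x a b * R b j) -
            (∑ a : Fin n, L i a * coordMatrix σ y a b * R b j) =
            ∑ a : Fin n, (L i a * coordMatrix σ x a b * R b j
              - L i a * coordMatrix σ y a b * R b j) := by
          intro b
          rw [Finset.sum_sub_distrib]
        rw [Finset.sum_congr rfl fun b _ => hinner b]
        rw [Finset.sum_eq_single j]
        · rw [Finset.sum_eq_single i]
          · rw [hL.1, hR.1]; ring
          · intro a _ ha
            rw [keyterm a j (by rintro ⟨rfl, -⟩; exact ha rfl)]
            ring
          · simp
        · intro b _ hb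
          refine Finset.sum_eq_zero fun a _ => ?_
          rw [keyterm a b (by rintro ⟨-, rfl⟩; exact hb rfl)]
          ring
        · simp
      have hex := expand x
      have hey := expand y
      linear_combination hex - hey + hsum
    -- claim B
    have hB : ∑ a ∈ (Finset.Ioo i j).attach,
          (if (i, a.1) ∈ inversionSet σ then
            cEnt (inversionSet σ) (L * coordMatrix σ x * R) i a.1 else 0) *
          (if (a.1, j) ∈ inversionSet σ then 0 else
            cEnt (inversionSet σ) (L * coordMatrix σ x * R) a.1 j)
        = ∑ a ∈ (Finset.Ioo i j).attach,
          (if (i, a.1) ∈ inversionSet σ then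
            cEnt (inversionSet σ) (L * coordMatrix σ y * R) i a.1 else 0) *
          (if (a.1, j) ∈ inversionSet σ then 0 else
            cEnt (inversionSet σ) (L * coordMatrix σ y * R) a.1 j) := by
      refine Finset.sum_congr rfl fun a _ => ?_
      have ha := Finset.mem_Ioo.mp a.2
      have h1 : (i : ℕ) < a.1 := ha.1
      have h2 : (a.1 : ℕ) < j := ha.2
      have e1 : (if (i, a.1) ∈ inversionSet σ then
            cEnt (inversionSet σ) (L * coordMatrix σ x * R) i a.1 else 0) =
          (if (i, a.1) ∈ inversionSet σ then
            cEnt (inversionSet σ) (L * coordMatrix σ y * R) i a.1 else 0) := by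
        by_cases hS : (i, a.1) ∈ inversionSet σ
        · rw [if_pos hS, if_pos hS]
          have hd := ih i a.1 ha.1 (by omega) x y (fun q hq => hxy q (by omega))
          have hc : coordMatrix σ x i a.1 = coordMatrix σ y i a.1 := by
            rw [coord_apply_mem σ x _ _ hS, coord_apply_mem σ y _ _ hS]
            exact hxy ⟨(i, a.1), hS⟩ (by
              show ((a.1 : ℕ)) - ((i : ℕ)) < (j : ℕ) - (i : ℕ)
              omega)
          linear_combination hd + hc
        · rw [if_neg hS, if_neg hS]
      have e2 : (if (a.1, j) ∈ inversionSet σ then 0 else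
            cEnt (inversionSet σ) (L * coordMatrix σ x * R) a.1 j) =
          (if (a.1, j) ∈ inversionSet σ then 0 else
            cEnt (inversionSet σ) (L * coordMatrix σ y * R) a.1 j) := by
        by_cases hS : (a.1, j) ∈ inversionSet σ
        · rw [if_pos hS, if_pos hS]
        · rw [if_neg hS, if_neg hS]
          have hd := ih a.1 j ha.2 (by omega) x y (fun q hq => hxy q (by omega))
          have hc : coordMatrix σ x a.1 j = 0 := coord_apply_nmem σ x
            (ne_of_lt ha.2) hS
          have hc' : coordMatrix σ y a.1 j = 0 := coord_apply_nmem σ y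
            (ne_of_lt ha.2) hS
          linear_combination hd + hc - hc'
      rw [e1, e2]
    linear_combination hA - hB

end Main

lemma supp_true_of_unitri {u : Matrix (Fin n) (Fin n) ℂ} (h : IsUpperUnitriangular u) :
    Supp (fun _ => True) u := ⟨h, fun _ _ _ hn => absurd trivial hn⟩

lemma trans_true : Trans' (fun _ : Fin n × Fin n => True) := fun _ _ _ _ _ _ _ => trivial


/-- (i) `N₁` and `N₂` are subgroups of the group `N` of upper unitriangular matrices and every
`u ∈ N` factors uniquely as `u = u₁·u₂` with `u₁ ∈ N₁`, `u₂ ∈ N₂`; (ii) for any `u₀ ∈ N`, the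
induced map `u ↦ (u₀·u·u₀⁻¹)₁` of `N₁` preserves Lebesgue measure in the entry coordinates
indexed by the inversion set. -/
theorem pattern_subgroup_factorization_and_measure_preservation
    (hn : 1 ≤ n) (σ : Equiv.Perm (Fin n)) :
    ((1 : Matrix (Fin n) (Fin n) ℂ) ∈ patternN₁ σ ∧
      (∀ u ∈ patternN₁ σ, ∀ v ∈ patternN₁ σ, u * v ∈ patternN₁ σ) ∧
      (∀ u ∈ patternN₁ σ, ∃ v ∈ patternN₁ σ, u * v = 1 ∧ v * u = 1)) ∧
    ((1 : Matrix (Fin n) (Fin n) ℂ) ∈ patternN₂ σ ∧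
      (∀ u ∈ patternN₂ σ, ∀ v ∈ patternN₂ σ, u * v ∈ patternN₂ σ) ∧
      (∀ u ∈ patternN₂ σ, ∃ v ∈ patternN₂ σ, u * v = 1 ∧ v * u = 1)) ∧
    (∀ u : Matrix (Fin n) (Fin n) ℂ, IsUpperUnitriangular u →
      ∃! p : Matrix (Fin n) (Fin n) ℂ × Matrix (Fin n) (Fin n) ℂ,
        p.1 ∈ patternN₁ σ ∧ p.2 ∈ patternN₂ σ ∧ u = p.1 * p.2) ∧
    (∀ u₀ : Matrix (Fin n) (Fin n) ℂ, IsUpperUnitriangular u₀ →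
      ∀ F : ({p // p ∈ inversionSet σ} → ℂ) → ({p // p ∈ inversionSet σ} → ℂ),
        (∀ x, ∃ v ∈ patternN₂ σ,
          u₀ * coordMatrix σ x * u₀⁻¹ = coordMatrix σ (F x) * v) →
        Measure.map F volume = volume) := by
  classical
  refine ⟨⟨?_, ?_, ?_⟩, ⟨?_, ?_, ?_⟩, ?_, ?_⟩
  · exact (mem_N1_iff σ 1).mpr (supp_one _)
  · intro u hu v hv
    exact (mem_N1_iff σ _).mpr (supp_mul (trans_inv σ) ((mem_N1_iff σ u).mp hu)
      ((mem_N1_iff σ v).mp hv))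
  · intro u hu
    obtain ⟨v, hv, h1, h2⟩ := supp_inv (trans_inv σ) ((mem_N1_iff σ u).mp hu)
    exact ⟨v, (mem_N1_iff σ v).mpr hv, h1, h2⟩
  · exact (mem_N2_iff σ 1).mpr (supp_one _)
  · intro u hu v hv
    exact (mem_N2_iff σ _).mpr (supp_mul (trans_compl σ) ((mem_N2_iff σ u).mp hu)
      ((mem_N2_iff σ v).mp hv))
  · intro u hu
    obtain ⟨v, hv, h1, h2⟩ := supp_inv (trans_compl σ) ((mem_N2_iff σ u).mp hu)
    exact ⟨v, (mem_N2_iff σ v).mpr hv, h1, h2⟩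
  · intro u hu
    refine ⟨(fact1 (inversionSet σ) u, fact2 (inversionSet σ) u),
      ⟨(mem_N1_iff σ _).mpr (fact1_supp _ u), (mem_N2_iff σ _).mpr (fact2_supp _ u),
        (fact_mul _ hu).symm⟩, ?_⟩
    rintro ⟨w₁, w₂⟩ ⟨hw1, hw2, heq⟩
    obtain ⟨e1, e2⟩ := fact_unique σ hu hw1 hw2 heq
    exact Prod.ext e1 e2
  · intro u₀ hu₀ F hFh
    obtain ⟨w, hw, hw1, hw2⟩ := supp_inv (trans_true) (supp_true_of_unitri hu₀)
    have hinv : u₀⁻¹ = w := Matrix.inv_eq_right_inv hw1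
    have hCtri : ∀ x, IsUpperUnitriangular (coordMatrix σ x) :=
      fun x => ((mem_N1_iff σ _).mp (coord_mem_N1 σ x)).1
    have hconj_tri : ∀ x, IsUpperUnitriangular (u₀ * coordMatrix σ x * w) := by
      intro x
      exact (supp_mul trans_true (supp_mul trans_true (supp_true_of_unitri hu₀)
        (supp_true_of_unitri (hCtri x))) hw).1
    have hFeq : F = fun x (p : {p // p ∈ inversionSet σ}) =>
        cEnt (inversionSet σ) (u₀ * coordMatrix σ x * w) p.1.1 p.1.2 := by
      funext x
      obtain ⟨v, hv, heq⟩ := hFh x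
      rw [hinv] at heq
      obtain ⟨e1, -⟩ := fact_unique σ (hconj_tri x) (coord_mem_N1 σ (F x)) hv heq
      funext p
      have hp := (inversionSet_mem_iff σ p.1).mp p.2
      have hcoord : coordMatrix σ (F x) p.1.1 p.1.2 = F x p :=
        coord_apply_mem σ (F x) p.1.1 p.1.2 p.2
      rw [← hcoord, e1, fact1_apply, if_neg (ne_of_lt hp.1), if_pos ⟨hp.1, p.2⟩]
    have hg : ∀ a b : Fin n, Measurable fun x : {p // p ∈ inversionSet σ} → ℂ =>
        (u₀ * coordMatrix σ x * w) a b := by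
      intro a b
      simp only [Matrix.mul_apply]
      apply Finset.measurable_sum
      intro c _
      refine Measurable.mul_const ?_ (w c b)
      apply Finset.measurable_sum
      intro d _
      exact (meas_coordEntry σ d c).const_mul (u₀ a d)
    have hFmeas : Measurable F := by
      rw [hFeq]
      apply measurable_pi_lambda
      intro p
      exact meas_cEnt (inversionSet σ) _ hg n p.1.1 p.1.2 (by have := p.1.2.isLt; omega)
    refine shear_aux n _ inferInstance (fun p => (p.1.2 : ℕ) - (p.1.1 : ℕ)) ?_ F hFmeas ?_
    · intro p
      have := p.1.2.isLt
      have hp := (inversionSet_mem_iff σ p.1).mp p.2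
      have hlt : (p.1.1 : ℕ) < (p.1.2 : ℕ) := hp.1
      show (p.1.2 : ℕ) - (p.1.1 : ℕ) < n
      omega
    · intro p x y hxy
      have hp := (inversionSet_mem_iff σ p.1).mp p.2
      have hx : x p = coordMatrix σ x p.1.1 p.1.2 :=
        (coord_apply_mem σ x p.1.1 p.1.2 p.2).symm
      have hy : y p = coordMatrix σ y p.1.1 p.1.2 :=
        (coord_apply_mem σ y p.1.1 p.1.2 p.2).symm
      simp only [hFeq]
      rw [hx, hy]
      exact cEnt_conj_dep σ hu₀ hw.1 n p.1.1 p.1.2 hp.1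
        (by have := p.1.2.isLt; omega) x y hxy
end

section
/- Let n ≥ 1, let a be an invertible diagonal n×n complex matrix with diagonal entries a₁, …, a_n, and let u be an upper unitriangular n×n complex matrix. Let V be the real vector space of strictly lower triangular n×n complex matrices and let π₋ : M_n(ℂ) → V be the projection sending a matrix to its strictly lower triangular part. Then the ℝ-linear endomorphism of V given by X ↦ π₋((a·u)·X·(a·u)⁻¹) has determinant ∏_{1 ≤ i < j ≤ n} |a_j / a_i|². -/
open Matrix

/-- Index type for entries strictly below the diagonal. -/
abbrev LIdx (n : ℕ) := {p : Fin n × Fin n // p.2 < p.1}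

def lidxKey {n : ℕ} (p : LIdx n) : ℕ := ((p.1.1 : ℕ) - (p.1.2 : ℕ)) * n + (p.1.1 : ℕ)

lemma lidxKey_inj {n : ℕ} : Function.Injective (lidxKey (n := n)) := by
  rintro ⟨⟨i, j⟩, h⟩ ⟨⟨i', j'⟩, h'⟩ heq
  simp only [lidxKey] at heq
  simp only [Fin.lt_def] at h h'
  have hi := i.isLt; have hi' := i'.isLt
  have hj := j.isLt; have hj' := j'.isLt
  have hmod : ((((i:ℕ) - j) * n + i) % n) = ((((i':ℕ) - j') * n + i') % n) := by rw [heq]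
  rw [Nat.mul_add_mod', Nat.mul_add_mod'] at hmod
  rw [Nat.mod_eq_of_lt hi, Nat.mod_eq_of_lt hi'] at hmod
  have h2 : ((i:ℕ) - j) * n = ((i':ℕ) - j') * n := by omega
  have h3 : (i:ℕ) - j = (i':ℕ) - j' := Nat.eq_of_mul_eq_mul_right (by omega) h2
  ext <;> simp only <;> omega

lemma lidxKey_le_of {n : ℕ} (p q : LIdx n) (h1 : p.1.1 ≤ q.1.1) (h2 : q.1.2 ≤ p.1.2) :
    lidxKey p ≤ lidxKey q := by
  rcases p with ⟨⟨i, j⟩, hp⟩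
  rcases q with ⟨⟨k, l⟩, hq⟩
  simp only [Fin.le_def] at h1 h2
  simp only [Fin.lt_def] at hp hq
  simp only [lidxKey]
  have hi := i.isLt; have hk := k.isLt
  rcases eq_or_lt_of_le (show (i : ℕ) - j ≤ (k : ℕ) - l by omega) with h | h
  · rw [h]; omega
  · have : ((i:ℕ) - j) * n + n ≤ ((k:ℕ)-l) * n := by nlinarith
    omega

/-- The real subspace of strictly lower triangular n×n complex matrices. -/
noncomputable def strictlyLowerTriangular (n : ℕ) : Submodule ℝ (Matrix (Fin n) (Fin n) ℂ) where
  carrier := {X | ∀ i j : Fin n, i ≤ j → X i j = 0}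
  add_mem' := by
    intro X Y hX hY i j hij
    simp [Matrix.add_apply, hX i j hij, hY i j hij]
  zero_mem' := by intro i j _; rfl
  smul_mem' := by
    intro c X hX i j hij
    simp [Matrix.smul_apply, hX i j hij]

noncomputable def lowEquiv (n : ℕ) :
    strictlyLowerTriangular n ≃ₗ[ℝ] (LIdx n × Fin 2 → ℝ) where
  toFun X := fun x => if x.2 = 0 then ((X : Matrix (Fin n) (Fin n) ℂ) x.1.1.1 x.1.1.2).re
    else ((X : Matrix (Fin n) (Fin n) ℂ) x.1.1.1 x.1.1.2).im
  map_add' X Y := by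
    funext x
    by_cases h : x.2 = 0 <;> simp [h]
  map_smul' c X := by
    funext x
    by_cases h : x.2 = 0 <;> simp [h, Complex.real_smul]
  invFun v := ⟨Matrix.of fun i j =>
      if h : j < i then (↑(v (⟨(i, j), h⟩, 0)) + ↑(v (⟨(i, j), h⟩, 1)) * Complex.I) else 0,
    by intro i j hij; simp only [Matrix.of_apply]; rw [dif_neg (not_lt.mpr hij)]⟩
  left_inv X := by
    apply Subtype.ext
    ext i j
    simp only [Matrix.of_apply]
    by_cases h : j < i
    · rw [dif_pos h]
      simp [Complex.re_add_im]
    · rw [dif_neg h]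
      exact (X.2 i j (not_lt.mp h)).symm
  right_inv v := by
    funext x
    rcases x with ⟨⟨⟨i, j⟩, hij⟩, c⟩
    fin_cases c <;> simp [hij]

section UInv
variable {n : ℕ} (u : Matrix (Fin n) (Fin n) ℂ)
  (hu_diag : ∀ i, u i i = 1) (hu_low : ∀ i j : Fin n, j < i → u i j = 0)

include hu_low in
lemma u_bt : u.BlockTriangular id := fun i j h => hu_low i j h

include hu_diag hu_low

lemma u_det : u.det = 1 := by
  rw [Matrix.det_of_upperTriangular (u_bt u hu_low)]
  simp [hu_diag]

lemma u_inv_low : ∀ i j : Fin n, j < i → u⁻¹ i j = 0 := by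
  haveI : Invertible u := u.invertibleOfIsUnitDet (by rw [u_det u hu_diag hu_low]; exact isUnit_one)
  have := Matrix.blockTriangular_inv_of_blockTriangular (u_bt u hu_low)
  exact fun i j h => this h

lemma u_inv_diag : ∀ j, u⁻¹ j j = 1 := by
  intro j
  haveI : Invertible u := u.invertibleOfIsUnitDet (by rw [u_det u hu_diag hu_low]; exact isUnit_one)
  have h1 : (u * u⁻¹) j j = 1 := by rw [Matrix.mul_inv_of_invertible]; simp
  rw [Matrix.mul_apply] at h1
  rw [Finset.sum_eq_single j] at h1
  · rw [hu_diag j, one_mul] at h1; exact h1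
  · intro k _ hk
    rcases lt_or_gt_of_ne hk with h | h
    · rw [hu_low j k h, zero_mul]
    · rw [u_inv_low u hu_diag hu_low k j h, mul_zero]
  · intro h; exact absurd (Finset.mem_univ j) h

end UInv

lemma mul_std_mul {n : ℕ} (A B : Matrix (Fin n) (Fin n) ℂ) (k l i j : Fin n) (z : ℂ) :
    (A * Matrix.single k l z * B) i j = A i k * z * B l j := by
  rw [Matrix.mul_assoc, Matrix.mul_apply]
  simp [Matrix.mul_apply, Matrix.single, ite_and, Finset.mul_sum, mul_assoc]

/-- Let `a` be an invertible diagonal matrix with entries `a₁, …, a_n` and `u` upper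
unitriangular.  Any ℝ-linear endomorphism `T` of the space `V` of strictly lower triangular
matrices which agrees below the diagonal with `X ↦ (a·u)·X·(a·u)⁻¹` (i.e. `T = π₋ ∘ Ad_{au}`)
has determinant `∏_{i<j} |a_j/a_i|²`. -/
theorem det_of_projected_conjugation
    (n : ℕ) (a : Fin n → ℂ) (ha : ∀ i, a i ≠ 0)
    (u : Matrix (Fin n) (Fin n) ℂ)
    (hu_diag : ∀ i, u i i = 1) (hu_low : ∀ i j : Fin n, j < i → u i j = 0)
    (T : strictlyLowerTriangular n →ₗ[ℝ] strictlyLowerTriangular n)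
    (hT : ∀ X : strictlyLowerTriangular n, ∀ i j : Fin n, j < i →
      (T X : Matrix (Fin n) (Fin n) ℂ) i j
        = ((Matrix.diagonal a * u) * (X : Matrix (Fin n) (Fin n) ℂ)
            * (Matrix.diagonal a * u)⁻¹) i j) :
    LinearMap.det T
      = ∏ p ∈ Finset.univ.filter (fun p : Fin n × Fin n => p.1 < p.2),
          ‖a p.2 / a p.1‖ ^ 2 := by
  classical
  haveI : Invertible u :=
    u.invertibleOfIsUnitDet (by rw [u_det u hu_diag hu_low]; exact isUnit_one)
  set A : Matrix (Fin n) (Fin n) ℂ := Matrix.diagonal a * u with hA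
  set C : Matrix (Fin n) (Fin n) ℂ := u⁻¹ * Matrix.diagonal (fun i => (a i)⁻¹) with hC
  have hAC : A * C = 1 := by
    rw [hA, hC, Matrix.mul_assoc, ← Matrix.mul_assoc u, Matrix.mul_inv_of_invertible,
      Matrix.one_mul, Matrix.diagonal_mul_diagonal]
    have : (fun i => a i * (a i)⁻¹) = fun _ => (1 : ℂ) := by
      funext i; exact mul_inv_cancel₀ (ha i)
    rw [this, Matrix.diagonal_one]
  have hAinv : A⁻¹ = C := Matrix.inv_eq_right_inv hAC
  have hAe : ∀ i k, A i k = a i * u i k := fun i k => Matrix.diagonal_mul a u i k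
  have hCe : ∀ l j, C l j = u⁻¹ l j * (a j)⁻¹ := fun l j =>
    Matrix.mul_diagonal (fun i => (a i)⁻¹) u⁻¹ l j
  -- the basis
  set bV : Module.Basis (LIdx n × Fin 2) ℝ (strictlyLowerTriangular n) :=
    Module.Basis.ofEquivFun (lowEquiv n) with hbV
  set M : Matrix (LIdx n × Fin 2) (LIdx n × Fin 2) ℝ := LinearMap.toMatrix bV bV T with hM
  have hdet : LinearMap.det T = M.det := (LinearMap.det_toMatrix bV T).symm
  -- basis vectors are standard basis matrices
  have hb : ∀ y : LIdx n × Fin 2, (bV y : Matrix (Fin n) (Fin n) ℂ)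
      = Matrix.single y.1.1.1 y.1.1.2 (if y.2 = 0 then 1 else Complex.I) := by
    rintro ⟨⟨⟨k, l⟩, hkl⟩, d⟩
    have hby : bV (⟨(k, l), hkl⟩, d) = (lowEquiv n).symm (Pi.single (⟨(k, l), hkl⟩, d) 1) := by
      rw [hbV]
      exact congrFun (Module.Basis.coe_ofEquivFun (lowEquiv n)) _
    have hcoe : ∀ (v : LIdx n × Fin 2 → ℝ) (i j : Fin n),
        ((lowEquiv n).symm v : Matrix (Fin n) (Fin n) ℂ) i j
          = if h : j < i then ((v (⟨(i, j), h⟩, 0) : ℝ) : ℂ)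
              + ((v (⟨(i, j), h⟩, 1) : ℝ) : ℂ) * Complex.I else 0 := fun v i j => rfl
    rw [hby]
    ext i j
    rw [hcoe]
    by_cases h : j < i
    · rw [dif_pos h]
      by_cases hik : k = i <;> by_cases hjl : l = j <;>
        fin_cases d <;>
        simp [Pi.single_apply, Prod.ext_iff, Subtype.ext_iff, Matrix.single,
          hik, hjl, eq_comm]
    · rw [dif_neg h]
      have : ¬ (k = i ∧ l = j) := by
        rintro ⟨rfl, rfl⟩; exact h hkl
      simp [Matrix.single, this]
  -- the scalar associated to a pair of indices
  set w : LIdx n → LIdx n → ℂ := fun p q => A p.1.1 q.1.1 * C q.1.2 p.1.2 with hw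
  -- entries of M
  have hMe : ∀ x y : LIdx n × Fin 2, M x y =
      if x.2 = 0 then ((if y.2 = 0 then 1 else Complex.I) * w x.1 y.1).re
      else ((if y.2 = 0 then 1 else Complex.I) * w x.1 y.1).im := by
    intro x y
    have hx : x.1.1.2 < x.1.1.1 := x.1.2
    have hTb : (T (bV y) : Matrix (Fin n) (Fin n) ℂ) x.1.1.1 x.1.1.2
        = (if y.2 = 0 then 1 else Complex.I) * w x.1 y.1 := by
      rw [hT _ _ _ hx, hAinv, hb y, mul_std_mul, hw]
      ring
    rw [hM, LinearMap.toMatrix_apply, hbV, Module.Basis.ofEquivFun_repr_apply]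
    show (if x.2 = 0 then ((T (bV y) : Matrix (Fin n) (Fin n) ℂ) x.1.1.1 x.1.1.2).re
      else ((T (bV y) : Matrix (Fin n) (Fin n) ℂ) x.1.1.1 x.1.1.2).im) = _
    rw [hTb]
  -- vanishing of w off the "triangle"
  have hwz : ∀ p q : LIdx n, ¬ (lidxKey p ≤ lidxKey q) → w p q = 0 := by
    intro p q hpq
    by_contra hne
    have h1 : A p.1.1 q.1.1 ≠ 0 := fun h => hne (by rw [hw]; simp only [h, zero_mul])
    have h2 : C q.1.2 p.1.2 ≠ 0 := fun h => hne (by rw [hw]; simp only [h, mul_zero])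
    have hu1 : u p.1.1 q.1.1 ≠ 0 := by
      intro h; exact h1 (by rw [hAe, h, mul_zero])
    have hu2 : u⁻¹ q.1.2 p.1.2 ≠ 0 := by
      intro h; exact h2 (by rw [hCe, h, zero_mul])
    have hle1 : p.1.1 ≤ q.1.1 := by
      by_contra h
      exact hu1 (hu_low _ _ (lt_of_not_ge h))
    have hle2 : q.1.2 ≤ p.1.2 := by
      by_contra h
      exact hu2 (u_inv_low u hu_diag hu_low _ _ (lt_of_not_ge h))
    exact hpq (lidxKey_le_of p q hle1 hle2)
  have hwd : ∀ p : LIdx n, w p p = a p.1.1 * (a p.1.2)⁻¹ := by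
    intro p
    rw [hw]
    simp only
    rw [hAe, hCe, hu_diag, u_inv_diag u hu_diag hu_low, mul_one, one_mul]
  -- block triangularity
  have hbt : M.BlockTriangular (fun x => lidxKey x.1) := by
    intro x y hxy
    rw [hMe x y, hwz x.1 y.1 (by exact fun h => absurd (lt_of_lt_of_le hxy h) (lt_irrefl _)),
      mul_zero]
    by_cases h : x.2 = 0 <;> simp [h]
  -- determinant as product over blocks
  rw [hdet, hbt.det]
  have himg : Finset.univ.image (fun x : LIdx n × Fin 2 => lidxKey x.1)
      = Finset.univ.image (lidxKey (n := n)) := by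
    ext m
    simp only [Finset.mem_image, Finset.mem_univ, true_and]
    constructor
    · rintro ⟨x, hx⟩; exact ⟨x.1, hx⟩
    · rintro ⟨p, hp⟩; exact ⟨(p, 0), hp⟩
  rw [himg, Finset.prod_image (fun p _ q _ h => lidxKey_inj h)]
  -- each diagonal block has determinant ‖a i / a j‖²
  have hblock : ∀ p : LIdx n,
      (M.toSquareBlock (fun x => lidxKey x.1) (lidxKey p)).det = ‖a p.1.1 / a p.1.2‖ ^ 2 := by
    intro p
    let e2 : Fin 2 ≃ {x : LIdx n × Fin 2 // lidxKey x.1 = lidxKey p} :=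
      { toFun := fun c => ⟨(p, c), rfl⟩
        invFun := fun x => x.1.2
        left_inv := fun c => rfl
        right_inv := fun x => by
          have h1 : x.1.1 = p := lidxKey_inj x.2
          apply Subtype.ext
          exact Prod.ext h1.symm rfl }
    rw [← Matrix.det_submatrix_equiv_self e2, Matrix.det_fin_two]
    have hE : ∀ c d : Fin 2,
        ((M.toSquareBlock (fun x => lidxKey x.1) (lidxKey p)).submatrix e2 e2) c d
          = M (p, c) (p, d) := fun c d => rfl
    rw [hE, hE, hE, hE, hMe, hMe, hMe, hMe, hwd p]
    set z : ℂ := a p.1.1 * (a p.1.2)⁻¹ with hz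
    have hnorm : ‖a p.1.1 / a p.1.2‖ ^ 2 = z.re * z.re + z.im * z.im := by
      rw [div_eq_mul_inv, ← hz, Complex.sq_norm, Complex.normSq_apply]
    rw [hnorm]
    norm_num [Complex.mul_re, Complex.mul_im]
  rw [Finset.prod_congr rfl (fun p _ => hblock p)]
  -- reindex the product
  have h1 : ∏ p : LIdx n, ‖a p.1.1 / a p.1.2‖ ^ 2
      = ∏ x ∈ Finset.univ.filter (fun p : Fin n × Fin n => p.2 < p.1), ‖a x.1 / a x.2‖ ^ 2 :=
    (Finset.prod_subtype (p := fun p : Fin n × Fin n => p.2 < p.1)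
      (Finset.univ.filter (fun p : Fin n × Fin n => p.2 < p.1))
      (fun x => by simp) (fun x : Fin n × Fin n => ‖a x.1 / a x.2‖ ^ 2)).symm
  rw [h1]
  refine Finset.prod_nbij' (fun x => Prod.swap x) (fun x => Prod.swap x) ?_ ?_ ?_ ?_ ?_ <;>
    simp [Prod.swap]
end
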